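/- Let P and P' be ⊕-bisimilar and uniform AC-MAS (over domains U and U') and let φ be an FO-CTLK formula. Suppose that (1) for every temporal-epistemic run r with r(0) = s0 and all k ≥ 0, |U'| ≥ |adom(r(k)) ∪ adom(r(k+1)) ∪ C| + |vars(φ)|, and (2) for every temporal-epistemic run r' with r'(0) = s0' and all k ≥ 0, |U| ≥ |adom(r'(k)) ∪ adom(r'(k+1)) ∪ C| + |vars(φ)|. Then P ⊨ φ if and only if P' ⊨ φ. -/

import Mathlib

/-!  Common formalisation of artifact-centric multi-agent systems (AC-MAS). -/

open Set

/-- A database schema: a finite type of relation symbols, each with an arity. -/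
structure Schema : Type 1 where
  Rel : Type
  [relFin : Fintype Rel]
  arity : Rel → ℕ

attribute [instance] Schema.relFin

/-- A `D`-instance over an interpretation domain `U`: every relation symbol is
interpreted as a finite set of tuples over `U`. -/
structure Inst (D : Schema) (U : Type) : Type where
  rel : ∀ r : D.Rel, Set (Fin (D.arity r) → U)
  finite : ∀ r, (rel r).Finite

/-- The active domain of an instance. -/
def Inst.adom {D : Schema} {U : Type} (I : Inst D U) : Set U :=
  { u | ∃ (r : D.Rel) (t : Fin (D.arity r) → U), t ∈ I.rel r ∧ ∃ j, t j = u }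

/-- The schema `D` together with a primed copy of every relation symbol. -/
def Schema.double (D : Schema) : Schema where
  Rel := D.Rel ⊕ D.Rel
  relFin := inferInstance
  arity := Sum.elim D.arity D.arity

/-- The disjunctive join `I ⊕ J`: unprimed symbols are interpreted as in `I`,
primed symbols as in `J`. -/
def Inst.oplus {D : Schema} {U : Type} (I J : Inst D U) : Inst D.double U where
  rel := fun r => match r with
    | .inl r₀ => I.rel r₀
    | .inr r₀ => J.rel r₀
  finite := fun r => by
    cases r with
    | inl r₀ => exact I.finite r₀
    | inr r₀ => exact J.finite r₀

/-- Image of an instance under a map of domains. -/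
def Inst.map {D : Schema} {C U : Type} (f : C → U) (I : Inst D C) : Inst D U where
  rel := fun r => (fun t => f ∘ t) '' I.rel r
  finite := fun r => (I.finite r).image _

/-! ### First-order formulas -/

/-- Terms: variables (natural numbers) or constants from `C`. -/
abbrev Term (C : Type) := ℕ ⊕ C

def Term.varsF {C : Type} : Term C → Finset ℕ
  | .inl x => {x}
  | .inr _ => ∅

def Term.constsS {C : Type} : Term C → Set C
  | .inl _ => ∅
  | .inr c => {c}

def Term.val {C U : Type} (cst : C → U) (σ : ℕ → U) : Term C → U
  | .inl x => σ x
  | .inr c => cst c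

/-- First-order formulas over schema `D`, with equality, constants from `C`
and no function symbols. -/
inductive FO (D : Schema) (C : Type) : Type where
  | eq : Term C → Term C → FO D C
  | rel : (r : D.Rel) → (Fin (D.arity r) → Term C) → FO D C
  | not : FO D C → FO D C
  | imp : FO D C → FO D C → FO D C
  | all : ℕ → FO D C → FO D C

namespace FO

variable {D : Schema} {C : Type}

/-- Free variables. -/
def free : FO D C → Finset ℕ
  | .eq t₁ t₂ => t₁.varsF ∪ t₂.varsF
  | .rel _ ts => Finset.univ.biUnion fun j => (ts j).varsF
  | .not φ => φ.free
  | .imp φ ψ => φ.free ∪ ψ.free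
  | .all x φ => φ.free.erase x

/-- All variables. -/
def vars : FO D C → Finset ℕ
  | .eq t₁ t₂ => t₁.varsF ∪ t₂.varsF
  | .rel _ ts => Finset.univ.biUnion fun j => (ts j).varsF
  | .not φ => φ.vars
  | .imp φ ψ => φ.vars ∪ ψ.vars
  | .all x φ => insert x φ.vars

/-- Constants mentioned in a formula. -/
def consts : FO D C → Set C
  | .eq t₁ t₂ => t₁.constsS ∪ t₂.constsS
  | .rel _ ts => ⋃ j, (ts j).constsS
  | .not φ => φ.consts
  | .imp φ ψ => φ.consts ∪ ψ.consts
  | .all _ φ => φ.consts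

/-- The formula mentions only relation symbols from `R`. -/
def UsesOnly (R : Set D.Rel) : FO D C → Prop
  | .eq _ _ => True
  | .rel r _ => r ∈ R
  | .not φ => φ.UsesOnly R
  | .imp φ ψ => φ.UsesOnly R ∧ ψ.UsesOnly R
  | .all _ φ => φ.UsesOnly R

/-- Satisfaction of FO-formulas, with active-domain quantification. -/
def sat {U : Type} (cst : C → U) (I : Inst D U) : (ℕ → U) → FO D C → Prop
  | σ, .eq t₁ t₂ => t₁.val cst σ = t₂.val cst σ
  | σ, .rel r ts => (fun j => (ts j).val cst σ) ∈ I.rel r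
  | σ, .not φ => ¬ sat cst I σ φ
  | σ, .imp φ ψ => sat cst I σ φ → sat cst I σ ψ
  | σ, .all x φ => ∀ u ∈ I.adom, sat cst I (Function.update σ x u) φ

end FO

/-! ### Agents and AC-MAS -/

/-- The signature of an agent: a finite set of action types with parameter counts. -/
structure AgentSig : Type 1 where
  Act : Type
  [actFin : Fintype Act]
  np : Act → ℕ

attribute [instance] AgentSig.actFin

/-- A ground action: an action type together with ground parameters. -/
def GAct (g : AgentSig) (U : Type) : Type := Σ a : g.Act, Fin (g.np a) → U

/-- Renaming of ground-action parameters. -/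
def GAct.map {g : AgentSig} {U U' : Type} (f : U → U') : GAct g U → GAct g U'
  | ⟨a, u⟩ => ⟨a, fun j => f (u j)⟩

/-- An agent: local states structured as database instances, and a protocol. -/
structure Agent (D : Schema) (g : AgentSig) (U : Type) : Type where
  L : Set (Inst D U)
  Pr : Inst D U → Set (GAct g U)

/-- A global state: one local database instance per agent `0, …, n`
(agent `0` is the environment). -/
abbrev GState (D : Schema) (n : ℕ) (U : Type) := Fin (n+1) → Inst D U

/-- A joint (global) ground action. -/
abbrev JAct {n : ℕ} (sig : Fin (n+1) → AgentSig) (U : Type) : Type := ∀ i, GAct (sig i) U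

def JAct.map {n : ℕ} {sig : Fin (n+1) → AgentSig} {U U' : Type} (f : U → U')
    (a : JAct sig U) : JAct sig U' := fun i => (a i).map f

/-- The set of individuals occurring as parameters of a joint ground action. -/
def actElems {n : ℕ} {sig : Fin (n+1) → AgentSig} {U : Type} (a : JAct sig U) : Set U :=
  { u | ∃ (i : Fin (n+1)) (j : Fin ((sig i).np (a i).1)), (a i).2 j = u }

/-- Active domain of a family of instances (e.g. a global state). -/
def adomF {D : Schema} {X U : Type} (s : X → Inst D U) : Set U := ⋃ i, (s i).adom

/-- The global instance `D_s` associated with a global state. -/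
def gInst {D : Schema} {n : ℕ} {U : Type} (s : GState D n U) : Inst D U where
  rel := fun r => ⋃ i, (s i).rel r
  finite := fun r => Set.finite_iUnion fun i => (s i).finite r

/-- Componentwise disjunctive join of two global states. -/
def oplusG {D : Schema} {n : ℕ} {U : Type} (s t : GState D n U) : GState D.double n U :=
  fun i => (s i).oplus (t i)

/-- An artifact-centric multi-agent system. -/
structure ACMAS (D : Schema) {n : ℕ} (sig : Fin (n+1) → AgentSig) {U : Type}
    (Ag : ∀ i, Agent D (sig i) U) : Type where
  /-- set of (reachable) global states -/
  S : Set (GState D n U)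
  /-- initial global state -/
  s0 : GState D n U
  s0_mem : s0 ∈ S
  states_local : ∀ s ∈ S, ∀ i, s i ∈ (Ag i).L
  /-- global transition function -/
  τ : GState D n U → JAct sig U → Set (GState D n U)
  /-- `τ` is defined only on protocol-enabled joint actions -/
  tau_enabled : ∀ s a, (τ s a).Nonempty → ∀ i, a i ∈ (Ag i).Pr (s i)
  tau_closed : ∀ s ∈ S, ∀ a, τ s a ⊆ S

namespace ACMAS

variable {D : Schema} {n : ℕ} {sig : Fin (n+1) → AgentSig} {U : Type}
  {Ag : ∀ i, Agent D (sig i) U}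

/-- The transition relation `s → t`. -/
def Tr (M : ACMAS D sig Ag) (s t : GState D n U) : Prop := ∃ a, t ∈ M.τ s a

/-- Epistemic indistinguishability for agent `i`. -/
def Epi (M : ACMAS D sig Ag) (i : Fin (n+1)) (s t : GState D n U) : Prop :=
  s ∈ M.S ∧ t ∈ M.S ∧ s i = t i

/-- Union of the epistemic relations of agents `1, …, n`. -/
def EpiAny (M : ACMAS D sig Ag) (s t : GState D n U) : Prop :=
  ∃ i : Fin n, M.Epi i.succ s t

/-- The standard assumptions: the transition relation is serial and `S` is
exactly the set of states reachable from `s0`. -/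
def Std (M : ACMAS D sig Ag) : Prop :=
  (∀ s ∈ M.S, ∃ t, M.Tr s t) ∧ M.S = { s | Relation.ReflTransGen M.Tr M.s0 s }

/-- An (infinite) run. -/
def IsRun (M : ACMAS D sig Ag) (r : ℕ → GState D n U) : Prop :=
  (∀ k, r k ∈ M.S) ∧ ∀ k, M.Tr (r k) (r (k+1))

/-- A temporal-epistemic run. -/
def IsTERun (M : ACMAS D sig Ag) (r : ℕ → GState D n U) : Prop :=
  (∀ k, r k ∈ M.S) ∧ ∀ k, M.Tr (r k) (r (k+1)) ∨ M.EpiAny (r k) (r (k+1))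

end ACMAS

/-! ### Isomorphisms and equivalent assignments -/

/-- `ι` is a witness for the isomorphism of the families `s` and `s'`:
a constant-preserving bijection between the active domains extended with the
constants, preserving all relations componentwise. -/
def IsWitness {D : Schema} {X C U U' : Type} (cst : C → U) (cst' : C → U')
    (ι : U → U') (s : X → Inst D U) (s' : X → Inst D U') : Prop :=
  Set.BijOn ι (adomF s ∪ Set.range cst) (adomF s' ∪ Set.range cst') ∧
  (∀ c, ι (cst c) = cst' c) ∧
  ∀ (i : X) (r : D.Rel) (t : Fin (D.arity r) → U),
    (∀ j, t j ∈ adomF s ∪ Set.range cst) →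
    (t ∈ (s i).rel r ↔ (fun j => ι (t j)) ∈ (s' i).rel r)

/-- Isomorphism of families of instances (in particular global states). -/
def Iso {D : Schema} {X C U U' : Type} (cst : C → U) (cst' : C → U')
    (s : X → Inst D U) (s' : X → Inst D U') : Prop :=
  ∃ ι, IsWitness cst cst' ι s s'

/-- Equivalent assignments for a set `V` of variables w.r.t. `s` and `s'`. -/
def EqAssign {D : Schema} {n : ℕ} {C U U' : Type} (cst : C → U) (cst' : C → U')
    (V : Set ℕ) (σ : ℕ → U) (σ' : ℕ → U')
    (s : GState D n U) (s' : GState D n U') : Prop :=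
  ∃ γ : U → U',
    Set.BijOn γ (adomF s ∪ Set.range cst ∪ σ '' V)
      (adomF s' ∪ Set.range cst' ∪ σ' '' V) ∧
    IsWitness cst cst' γ s s' ∧
    ∀ x ∈ V, σ' x = γ (σ x)

/-! ### Simulations and bisimulations -/

section Bisim

variable {D : Schema} {n : ℕ} {sig sig' : Fin (n+1) → AgentSig} {C U U' : Type}
  {Ag : ∀ i, Agent D (sig i) U} {Ag' : ∀ i, Agent D (sig' i) U'}

/-- Simulation between two AC-MAS. -/
def IsSim (cst : C → U) (cst' : C → U')
    (M : ACMAS D sig Ag) (M' : ACMAS D sig' Ag')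
    (R : GState D n U → GState D n U' → Prop) : Prop :=
  ∀ s s', R s s' →
    s ∈ M.S ∧ s' ∈ M'.S ∧ Iso cst cst' s s' ∧
    ∀ t, M.Tr s t → ∃ t', M'.Tr s' t' ∧ R t t'

/-- Bisimulation. -/
def IsBisim (cst : C → U) (cst' : C → U')
    (M : ACMAS D sig Ag) (M' : ACMAS D sig' Ag')
    (R : GState D n U → GState D n U' → Prop) : Prop :=
  IsSim cst cst' M M' R ∧ IsSim cst' cst M' M (fun s' s => R s s')

/-- Bisimilarity of states. -/
def Bisimilar (cst : C → U) (cst' : C → U')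
    (M : ACMAS D sig Ag) (M' : ACMAS D sig' Ag')
    (s : GState D n U) (s' : GState D n U') : Prop :=
  ∃ R, IsBisim cst cst' M M' R ∧ R s s'

/-- `P ≈ P'`: the two systems are bisimilar. -/
def BisimSys (cst : C → U) (cst' : C → U')
    (M : ACMAS D sig Ag) (M' : ACMAS D sig' Ag') : Prop :=
  Bisimilar cst cst' M M' M.s0 M'.s0

/-- ⊕-simulation. -/
def IsOSim (cst : C → U) (cst' : C → U')
    (M : ACMAS D sig Ag) (M' : ACMAS D sig' Ag')
    (R : GState D n U → GState D n U' → Prop) : Prop :=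
  ∀ s s', R s s' →
    s ∈ M.S ∧ s' ∈ M'.S ∧ Iso cst cst' s s' ∧
    (∀ t, M.Tr s t → ∃ t', M'.Tr s' t' ∧
        Iso cst cst' (oplusG s t) (oplusG s' t') ∧ R t t') ∧
    (∀ (t : GState D n U) (i : Fin n), M.Epi i.succ s t →
        ∃ t', M'.Epi i.succ s' t' ∧
          Iso cst cst' (oplusG s t) (oplusG s' t') ∧ R t t')

/-- ⊕-bisimulation. -/
def IsOBisim (cst : C → U) (cst' : C → U')
    (M : ACMAS D sig Ag) (M' : ACMAS D sig' Ag')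
    (R : GState D n U → GState D n U' → Prop) : Prop :=
  IsOSim cst cst' M M' R ∧ IsOSim cst' cst M' M (fun s' s => R s s')

/-- ⊕-bisimilarity of states. -/
def OBisimilar (cst : C → U) (cst' : C → U')
    (M : ACMAS D sig Ag) (M' : ACMAS D sig' Ag')
    (s : GState D n U) (s' : GState D n U') : Prop :=
  ∃ R, IsOBisim cst cst' M M' R ∧ R s s'

/-- The two systems are ⊕-bisimilar. -/
def OBisimSys (cst : C → U) (cst' : C → U')
    (M : ACMAS D sig Ag) (M' : ACMAS D sig' Ag') : Prop :=
  OBisimilar cst cst' M M' M.s0 M'.s0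

end Bisim

/-! ### Uniformity and boundedness -/

section Uniform

variable {D : Schema} {n : ℕ} {sig : Fin (n+1) → AgentSig} {C U : Type}
  {Ag : ∀ i, Agent D (sig i) U}

/-- Temporal condition (1) of uniformity. -/
def UniformT (cst : C → U) (M : ACMAS D sig Ag) : Prop :=
  ∀ s ∈ M.S, ∀ t ∈ M.S, ∀ s' ∈ M.S, ∀ (t' : GState D n U) (a : JAct sig U),
    t ∈ M.τ s a →
    ∀ ι : U → U, IsWitness cst cst ι (oplusG s t) (oplusG s' t') →
    ∀ ι' : U → U,
      (∀ u ∈ adomF (oplusG s t) ∪ Set.range cst, ι' u = ι u) →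
      Set.InjOn ι' (adomF (oplusG s t) ∪ Set.range cst ∪ actElems a) →
      (∀ c, ι' (cst c) = cst c) →
      t' ∈ M.τ s' (JAct.map ι' a)

/-- Epistemic condition (2) of uniformity. -/
def UniformE (cst : C → U) (M : ACMAS D sig Ag) : Prop :=
  ∀ s ∈ M.S, ∀ t ∈ M.S, ∀ s' ∈ M.S, ∀ (t' : GState D n U) (i : Fin n),
    M.Epi i.succ s t → Iso cst cst (oplusG s t) (oplusG s' t') →
    M.Epi i.succ s' t'

/-- Uniform AC-MAS. -/
def Uniform (cst : C → U) (M : ACMAS D sig Ag) : Prop :=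
  UniformT cst M ∧ UniformE cst M

/-- `b`-bounded AC-MAS: no reachable state has more than `b` distinct elements
in its active domain. -/
def BBounded (M : ACMAS D sig Ag) (b : ℕ) : Prop :=
  ∀ s ∈ M.S, (adomF s).Finite ∧ (adomF s).ncard ≤ b

end Uniform

/-- `N_Ag`: the sum over the agents of the maximal number of parameters of
their action types. -/
def NAg {n : ℕ} (sig : Fin (n+1) → AgentSig) : ℕ :=
  ∑ i, Finset.univ.sup (sig i).np

/-! ### Abstractions -/

section Abstraction

variable {D : Schema} {n : ℕ} {sig : Fin (n+1) → AgentSig} {C U U' : Type}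
  {Ag : ∀ i, Agent D (sig i) U} {Ag' : ∀ i, Agent D (sig i) U'}

/-- `A'` is the abstract agent corresponding to `A`, over the domain `U'`. -/
def IsAbstractAgent {g : AgentSig} (cst : C → U) (cst' : C → U')
    (A : Agent D g U) (A' : Agent D g U') : Prop :=
  ∀ (l' : Inst D U') (α' : GAct g U'), α' ∈ A'.Pr l' ↔
    ∃ l ∈ A.L, ∃ α ∈ A.Pr l, ∃ ι : U → U',
      IsWitness cst cst' ι (fun _ : PUnit => l) (fun _ : PUnit => l') ∧
      ∃ ι' : U → U',
        (∀ u ∈ l.adom ∪ Set.range cst, ι' u = ι u) ∧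
        Set.InjOn ι' (l.adom ∪ Set.range cst ∪ Set.range α.2) ∧
        α' = α.map ι'

/-- `M'` is an abstraction of `M` (over the abstract agents `Ag'`). -/
def IsAbstraction (cst : C → U) (cst' : C → U')
    (M : ACMAS D sig Ag) (M' : ACMAS D sig Ag') : Prop :=
  (∀ i, IsAbstractAgent cst cst' (Ag i) (Ag' i)) ∧
  Iso cst' cst M'.s0 M.s0 ∧
  ∀ (s' t' : GState D n U') (a' : JAct sig U'),
    t' ∈ M'.τ s' a' ↔
      ∃ s ∈ M.S, ∃ t ∈ M.S, ∃ a : JAct sig U, t ∈ M.τ s a ∧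
        ∃ ι : U → U', IsWitness cst cst' ι s s' ∧ IsWitness cst cst' ι t t' ∧
          ∃ ι' : U → U',
            (∀ u ∈ adomF s ∪ adomF t ∪ Set.range cst, ι' u = ι u) ∧
            Set.InjOn ι' (adomF s ∪ adomF t ∪ Set.range cst ∪ actElems a) ∧
            a' = JAct.map ι' a

/-- `M'` is a ⊕-abstraction of `M` (over the abstract agents `Ag'`).
The requirement `s0' = s0` is rendered, across the two interpretation
domains, as: the initial states are isomorphic and `adom(s0) ⊆ C`. -/
def IsOAbstraction (cst : C → U) (cst' : C → U')
    (M : ACMAS D sig Ag) (M' : ACMAS D sig Ag') : Prop :=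
  (∀ i, IsAbstractAgent cst cst' (Ag i) (Ag' i)) ∧
  (Iso cst cst' M.s0 M'.s0 ∧ adomF M.s0 ⊆ Set.range cst) ∧
  ∀ (s' t' : GState D n U') (a' : JAct sig U'),
    t' ∈ M'.τ s' a' ↔
      ∃ s ∈ M.S, ∃ t ∈ M.S, ∃ a : JAct sig U, t ∈ M.τ s a ∧
        ∃ ι : U → U',
          IsWitness cst cst' ι (oplusG s t) (oplusG s' t') ∧
          ∃ ι' : U → U',
            (∀ u ∈ adomF (oplusG s t) ∪ Set.range cst, ι' u = ι u) ∧
            Set.InjOn ι' (adomF (oplusG s t) ∪ Set.range cst ∪ actElems a) ∧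
            a' = JAct.map ι' a

end Abstraction

/-! ### Temporal-epistemic specification languages -/

/-- Sentence-atomic FO-CTL formulas. -/
inductive SAFOCTL (D : Schema) (C : Type) : Type where
  | atom : (ψ : FO D C) → ψ.free = ∅ → SAFOCTL D C
  | not : SAFOCTL D C → SAFOCTL D C
  | imp : SAFOCTL D C → SAFOCTL D C → SAFOCTL D C
  | ax : SAFOCTL D C → SAFOCTL D C
  | au : SAFOCTL D C → SAFOCTL D C → SAFOCTL D C
  | eu : SAFOCTL D C → SAFOCTL D C → SAFOCTL D C

/-- Satisfaction of SA-FO-CTL formulas at a global state. -/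
def SAFOCTL.sat {D : Schema} {C : Type} {n : ℕ} {sig : Fin (n+1) → AgentSig}
    {U : Type} {Ag : ∀ i, Agent D (sig i) U}
    (cst : C → U) (M : ACMAS D sig Ag) :
    SAFOCTL D C → GState D n U → Prop
  | .atom ψ _, s => ∀ σ, FO.sat cst (gInst s) σ ψ
  | .not φ, s => ¬ SAFOCTL.sat cst M φ s
  | .imp φ ψ, s => SAFOCTL.sat cst M φ s → SAFOCTL.sat cst M ψ s
  | .ax φ, s => ∀ r, M.IsRun r → r 0 = s → SAFOCTL.sat cst M φ (r 1)
  | .au φ ψ, s => ∀ r, M.IsRun r → r 0 = s →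
      ∃ k, SAFOCTL.sat cst M ψ (r k) ∧ ∀ j < k, SAFOCTL.sat cst M φ (r j)
  | .eu φ ψ, s => ∃ r, M.IsRun r ∧ r 0 = s ∧
      ∃ k, SAFOCTL.sat cst M ψ (r k) ∧ ∀ j < k, SAFOCTL.sat cst M φ (r j)

/-- `P ⊨ φ` for SA-FO-CTL. -/
def SAFOCTL.satM {D : Schema} {C : Type} {n : ℕ} {sig : Fin (n+1) → AgentSig}
    {U : Type} {Ag : ∀ i, Agent D (sig i) U}
    (cst : C → U) (M : ACMAS D sig Ag) (φ : SAFOCTL D C) : Prop :=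
  SAFOCTL.sat cst M φ M.s0

/-- FO-CTLK formulas, with epistemic operators for agents `1, …, n` and
common knowledge. -/
inductive FOCTLK (D : Schema) (C : Type) (n : ℕ) : Type where
  | atom : FO D C → FOCTLK D C n
  | not : FOCTLK D C n → FOCTLK D C n
  | imp : FOCTLK D C n → FOCTLK D C n → FOCTLK D C n
  | all : ℕ → FOCTLK D C n → FOCTLK D C n
  | ax : FOCTLK D C n → FOCTLK D C n
  | au : FOCTLK D C n → FOCTLK D C n → FOCTLK D C n
  | eu : FOCTLK D C n → FOCTLK D C n → FOCTLK D C n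
  | know : Fin n → FOCTLK D C n → FOCTLK D C n
  | ck : FOCTLK D C n → FOCTLK D C n

namespace FOCTLK

variable {D : Schema} {C : Type} {n : ℕ}

def free : FOCTLK D C n → Finset ℕ
  | .atom ψ => ψ.free
  | .not φ => φ.free
  | .imp φ ψ => φ.free ∪ ψ.free
  | .all x φ => φ.free.erase x
  | .ax φ => φ.free
  | .au φ ψ => φ.free ∪ ψ.free
  | .eu φ ψ => φ.free ∪ ψ.free
  | .know _ φ => φ.free
  | .ck φ => φ.free

def vars : FOCTLK D C n → Finset ℕ
  | .atom ψ => ψ.vars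
  | .not φ => φ.vars
  | .imp φ ψ => φ.vars ∪ ψ.vars
  | .all x φ => insert x φ.vars
  | .ax φ => φ.vars
  | .au φ ψ => φ.vars ∪ ψ.vars
  | .eu φ ψ => φ.vars ∪ ψ.vars
  | .know _ φ => φ.vars
  | .ck φ => φ.vars

/-- Satisfaction `(P, s, σ) ⊨ φ` of FO-CTLK formulas. -/
def sat {sig : Fin (n+1) → AgentSig} {U : Type} {Ag : ∀ i, Agent D (sig i) U}
    (cst : C → U) (M : ACMAS D sig Ag) :
    FOCTLK D C n → GState D n U → (ℕ → U) → Prop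
  | .atom ψ, s, σ => FO.sat cst (gInst s) σ ψ
  | .not φ, s, σ => ¬ sat cst M φ s σ
  | .imp φ ψ, s, σ => sat cst M φ s σ → sat cst M ψ s σ
  | .all x φ, s, σ => ∀ u ∈ adomF s, sat cst M φ s (Function.update σ x u)
  | .ax φ, s, σ => ∀ r, M.IsRun r → r 0 = s → sat cst M φ (r 1) σ
  | .au φ ψ, s, σ => ∀ r, M.IsRun r → r 0 = s →
      ∃ k, sat cst M ψ (r k) σ ∧ ∀ j < k, sat cst M φ (r j) σ
  | .eu φ ψ, s, σ => ∃ r, M.IsRun r ∧ r 0 = s ∧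
      ∃ k, sat cst M ψ (r k) σ ∧ ∀ j < k, sat cst M φ (r j) σ
  | .know i φ, s, σ => ∀ t, M.Epi i.succ s t → sat cst M φ t σ
  | .ck φ, s, σ => ∀ t, Relation.TransGen M.EpiAny s t → sat cst M φ t σ

/-- `P ⊨ φ` for FO-CTLK: satisfaction at the initial state under every
assignment. -/
def satM {sig : Fin (n+1) → AgentSig} {U : Type} {Ag : ∀ i, Agent D (sig i) U}
    (cst : C → U) (M : ACMAS D sig Ag) (φ : FOCTLK D C n) : Prop :=
  ∀ σ : ℕ → U, sat cst M φ M.s0 σ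

end FOCTLK

/-- FO-ECTLK: the existential fragment. -/
inductive FOECTLK (D : Schema) (C : Type) (n : ℕ) : Type where
  | atom : FO D C → FOECTLK D C n
  | and : FOECTLK D C n → FOECTLK D C n → FOECTLK D C n
  | or : FOECTLK D C n → FOECTLK D C n → FOECTLK D C n
  | all : ℕ → FOECTLK D C n → FOECTLK D C n
  | ex : ℕ → FOECTLK D C n → FOECTLK D C n
  | enext : FOECTLK D C n → FOECTLK D C n
  | eu : FOECTLK D C n → FOECTLK D C n → FOECTLK D C n
  | dknow : Fin n → FOECTLK D C n → FOECTLK D C n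
  | dck : FOECTLK D C n → FOECTLK D C n

/-- Satisfaction of FO-ECTLK formulas. -/
def FOECTLK.sat {D : Schema} {C : Type} {n : ℕ} {sig : Fin (n+1) → AgentSig}
    {U : Type} {Ag : ∀ i, Agent D (sig i) U}
    (cst : C → U) (M : ACMAS D sig Ag) :
    FOECTLK D C n → GState D n U → (ℕ → U) → Prop
  | .atom ψ, s, σ => FO.sat cst (gInst s) σ ψ
  | .and φ ψ, s, σ => FOECTLK.sat cst M φ s σ ∧ FOECTLK.sat cst M ψ s σ
  | .or φ ψ, s, σ => FOECTLK.sat cst M φ s σ ∨ FOECTLK.sat cst M ψ s σ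
  | .all x φ, s, σ => ∀ u ∈ adomF s, FOECTLK.sat cst M φ s (Function.update σ x u)
  | .ex x φ, s, σ => ∃ u ∈ adomF s, FOECTLK.sat cst M φ s (Function.update σ x u)
  | .enext φ, s, σ => ∃ r, M.IsRun r ∧ r 0 = s ∧ FOECTLK.sat cst M φ (r 1) σ
  | .eu φ ψ, s, σ => ∃ r, M.IsRun r ∧ r 0 = s ∧
      ∃ k, FOECTLK.sat cst M ψ (r k) σ ∧ ∀ j < k, FOECTLK.sat cst M φ (r j) σ
  | .dknow i φ, s, σ => ∃ t, M.Epi i.succ s t ∧ FOECTLK.sat cst M φ t σ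
  | .dck φ, s, σ => ∃ t, Relation.TransGen M.EpiAny s t ∧ FOECTLK.sat cst M φ t σ

/-- `P ⊨ φ` for FO-ECTLK. -/
def FOECTLK.satM {D : Schema} {C : Type} {n : ℕ} {sig : Fin (n+1) → AgentSig}
    {U : Type} {Ag : ∀ i, Agent D (sig i) U}
    (cst : C → U) (M : ACMAS D sig Ag) (φ : FOECTLK D C n) : Prop :=
  ∀ σ : ℕ → U, FOECTLK.sat cst M φ M.s0 σ

/-- `Mb` is the `b`-restriction of `M`. -/
def IsBRestriction {D : Schema} {n : ℕ} {sig : Fin (n+1) → AgentSig} {U : Type}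
    {Ag : ∀ i, Agent D (sig i) U} (Mb M : ACMAS D sig Ag) (b : ℕ) : Prop :=
  Mb.s0 = M.s0 ∧
  Mb.S = { s ∈ M.S | (adomF s).Finite ∧ (adomF s).ncard ≤ b } ∧
  ∀ s a, Mb.τ s a = { t ∈ M.τ s a | s ∈ Mb.S ∧ t ∈ Mb.S }

/-! ### Artifact-centric programs -/

/-- A declarative artifact-centric program. -/
structure ACProgram (D : Schema) (C : Type) {n : ℕ} (sig : Fin (n+1) → AgentSig) where
  /-- local database schemas, as sets of relation symbols -/
  locRel : Fin (n+1) → Set D.Rel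
  locDisj : ∀ i j, i ≠ j → Disjoint (locRel i) (locRel j)
  /-- initial local states; their values are constants -/
  l0 : ∀ _ : Fin (n+1), Inst D C
  l0_loc : ∀ i r, r ∉ locRel i → (l0 i).rel r = ∅
  /-- preconditions: FO-formulas over the local schema whose free variables
  are among the action parameters -/
  pre : ∀ i, (sig i).Act → FO D C
  /-- postconditions: FO-formulas over the global schema and its primed copy -/
  post : ∀ i, (sig i).Act → FO D.double C
  pre_free : ∀ i a, ↑(pre i a).free ⊆ { x : ℕ | x < (sig i).np a }
  post_free : ∀ i a, ↑(post i a).free ⊆ { x : ℕ | x < (sig i).np a }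
  pre_loc : ∀ i a, (pre i a).UsesOnly (locRel i)

namespace ACProgram

variable {D : Schema} {C : Type} {n : ℕ} {sig : Fin (n+1) → AgentSig}

/-- The constants mentioned in the program. -/
def progConsts (P : ACProgram D C sig) : Set C :=
  (⋃ i, (P.l0 i).adom) ∪
  ⋃ i, ⋃ a : (sig i).Act, ((P.pre i a).consts ∪ (P.post i a).consts)

/-- Ground values of the postcondition parameters of a joint ground action. -/
def postElems (P : ACProgram D C sig) {U : Type} (a : JAct sig U) : Set U :=
  { u | ∃ (i : Fin (n+1)) (j : Fin ((sig i).np (a i).1)),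
      (j : ℕ) ∈ (P.post i (a i).1).free ∧ (a i).2 j = u }

/-- The agent induced by the program for index `i`. -/
def InducedAgent {U : Type} (cst : C → U) (P : ACProgram D C sig) (i : Fin (n+1))
    (A : Agent D (sig i) U) : Prop :=
  A.L = { l : Inst D U | ∀ r, r ∉ P.locRel i → l.rel r = ∅ } ∧
  ∀ (l : Inst D U) (α : GAct (sig i) U), α ∈ A.Pr l ↔
    ∀ σ : ℕ → U, (∀ j : Fin ((sig i).np α.1), σ (j : ℕ) = α.2 j) →
      FO.sat cst l σ (P.pre i α.1)

/-- The transitions induced by the program. -/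
def InducedTrans {U : Type} (cst : C → U) (P : ACProgram D C sig)
    (s t : GState D n U) (a : JAct sig U) : Prop :=
  (∀ i, ∀ σ : ℕ → U, (∀ j : Fin ((sig i).np (a i).1), σ (j : ℕ) = (a i).2 j) →
      FO.sat cst (s i) σ (P.pre i (a i).1)) ∧
  adomF t ⊆ adomF s ∪ P.postElems a ∪ cst '' (⋃ i, (P.post i (a i).1).consts) ∧
  (∀ i, ∀ σ : ℕ → U, (∀ j : Fin ((sig i).np (a i).1), σ (j : ℕ) = (a i).2 j) →
      FO.sat cst ((gInst s).oplus (gInst t)) σ (P.post i (a i).1))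

/-- `M` is the AC-MAS induced by the program `P` (the transition relation is
assumed to be serial). -/
def InducedACMAS {U : Type} (cst : C → U) (P : ACProgram D C sig)
    (Ag : ∀ i, Agent D (sig i) U) (M : ACMAS D sig Ag) : Prop :=
  (∀ i, P.InducedAgent cst i (Ag i)) ∧
  M.s0 = (fun i => (P.l0 i).map cst) ∧
  (∀ s t a, t ∈ M.τ s a ↔ P.InducedTrans cst s t a) ∧
  M.Std

end ACProgram

section ExtLemma
variable {α β : Type}

lemma exists_fresh {A : Set α} {f : α → β} (hA : A.Finite) (hf : Set.InjOn f A)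
    {B : Set α} (hAB : A ⊂ B) (hB : B.Finite)
    (hcard : Cardinal.mk ↥B ≤ Cardinal.mk β) : ∃ c : β, c ∉ f '' A := by
  rw [← Set.ne_univ_iff_exists_notMem]
  intro hun
  cases finite_or_infinite β with
  | inr h =>
    exact Set.infinite_univ (hun ▸ (hA.image f))
  | inl h =>
    have h1 : (f '' A).ncard = A.ncard := Set.ncard_image_of_injOn hf
    have h2 : A.ncard < B.ncard := Set.ncard_lt_ncard hAB hB
    have h3 : B.ncard ≤ Nat.card β := by
      have := Cardinal.toNat_le_toNat hcard (Cardinal.lt_aleph0_of_finite β)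
      rw [← Nat.card_coe_set_eq]; exact this
    have h4 : (f '' A).ncard = Nat.card β := by rw [hun, Set.ncard_univ]
    omega

lemma exists_injOn_extension [Nonempty β] {A B : Set α} {f : α → β}
    (hAB : A ⊆ B) (hB : B.Finite) (hf : Set.InjOn f A)
    (hcard : Cardinal.mk ↥B ≤ Cardinal.mk β) :
    ∃ g : α → β, Set.EqOn g f A ∧ Set.InjOn g B := by
  classical
  obtain ⟨k, hk⟩ : ∃ k, (B \ A).ncard = k := ⟨_, rfl⟩
  induction k generalizing A f with
  | zero =>
    have hBA : B ⊆ A := by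
      have hd : B \ A = ∅ := (Set.ncard_eq_zero (hB.diff)).mp hk
      intro x hx
      by_contra hxA
      exact absurd (Set.mem_diff_of_mem hx hxA) (hd ▸ Set.notMem_empty x)
    exact ⟨f, Set.eqOn_refl f A, hf.mono hBA⟩
  | succ k ih =>
    have hne : (B \ A).Nonempty := Set.nonempty_of_ncard_ne_zero (by omega)
    obtain ⟨b, hb⟩ := hne
    obtain ⟨c, hc⟩ := exists_fresh (hB.subset hAB) hf
      (ssubset_of_subset_of_ne hAB (by rintro rfl; exact hb.2 hb.1)) hB hcard
    set f' := Function.update f b c with hf'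
    have hins : insert b A ⊆ B := Set.insert_subset hb.1 hAB
    have hf'A : ∀ x ∈ A, f' x = f x := by
      intro x hx
      exact Function.update_of_ne (by rintro rfl; exact hb.2 hx) _ _
    have hf'b : f' b = c := Function.update_self _ _ _
    have hinj : Set.InjOn f' (insert b A) := by
      intro x hx y hy hxy
      rcases hx with rfl | hx <;> rcases hy with rfl | hy
      · rfl
      · exfalso; rw [hf'b, hf'A y hy] at hxy
        exact hc ⟨y, hy, hxy.symm⟩
      · exfalso; rw [hf'b, hf'A x hx] at hxy
        exact hc ⟨x, hx, hxy⟩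
      · exact hf hx hy (by rwa [hf'A x hx, hf'A y hy] at hxy)
    have hcount : (B \ insert b A).ncard = k := by
      have : B \ insert b A = (B \ A) \ {b} := by
        ext x; simp [Set.mem_diff, Set.mem_insert_iff]; tauto
      rw [this, Set.ncard_diff_singleton_of_mem hb, hk]
      omega
    obtain ⟨g, hg1, hg2⟩ := ih hins hinj hcount
    exact ⟨g, fun x hx => (hg1 (Set.mem_insert_of_mem _ hx)).trans (hf'A x hx), hg2⟩

end ExtLemma

section AuxBasic

variable {D : Schema} {C : Type} {U U' U'' : Type} {X : Type}

/-- auxiliary: active domain together with constants. -/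
def domc (cst : C → U) (s : X → Inst D U) : Set U := adomF s ∪ Set.range cst

lemma Inst.adom_finite (I : Inst D U) : I.adom.Finite := by
  have : I.adom ⊆ ⋃ (r : D.Rel), ⋃ t ∈ I.rel r, Set.range t := by
    rintro u ⟨r, t, ht, j, rfl⟩
    exact Set.mem_iUnion.2 ⟨r, Set.mem_biUnion ht ⟨j, rfl⟩⟩
  exact Set.Finite.subset
    (Set.finite_iUnion fun r => (I.finite r).biUnion fun t _ => Set.finite_range t) this

lemma adomF_finite [Finite X] (s : X → Inst D U) : (adomF s).Finite :=
  Set.finite_iUnion fun i => (s i).adom_finite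

lemma domc_finite [Finite X] [Finite C] (cst : C → U) (s : X → Inst D U) :
    (domc cst s).Finite :=
  (adomF_finite s).union (Set.finite_range cst)

lemma mem_adom_of_rel {I : Inst D U} {r : D.Rel} {t : Fin (D.arity r) → U}
    (h : t ∈ I.rel r) (j : Fin (D.arity r)) : t j ∈ I.adom :=
  ⟨r, t, h, j, rfl⟩

lemma mem_adomF_of_rel {s : X → Inst D U} {i : X} {r : D.Rel} {t : Fin (D.arity r) → U}
    (h : t ∈ (s i).rel r) (j : Fin (D.arity r)) : t j ∈ adomF s :=
  Set.mem_iUnion.2 ⟨i, mem_adom_of_rel h j⟩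

lemma adom_gInst {n : ℕ} (s : GState D n U) : (gInst s).adom = adomF s := by
  ext u
  constructor
  · rintro ⟨r, t, ht, j, rfl⟩
    obtain ⟨i, hi⟩ := Set.mem_iUnion.1 ht
    exact mem_adomF_of_rel hi j
  · intro hu
    obtain ⟨i, hi⟩ := Set.mem_iUnion.1 hu
    obtain ⟨r, t, ht, j, rfl⟩ := hi
    exact ⟨r, t, Set.mem_iUnion.2 ⟨i, ht⟩, j, rfl⟩

lemma Inst.adom_oplus (I J : Inst D U) : (I.oplus J).adom = I.adom ∪ J.adom := by
  ext u
  constructor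
  · rintro ⟨r, t, ht, j, rfl⟩
    cases r with
    | inl r₀ => exact Or.inl ⟨r₀, t, ht, j, rfl⟩
    | inr r₀ => exact Or.inr ⟨r₀, t, ht, j, rfl⟩
  · rintro (⟨r, t, ht, j, rfl⟩ | ⟨r, t, ht, j, rfl⟩)
    · exact ⟨Sum.inl r, t, ht, j, rfl⟩
    · exact ⟨Sum.inr r, t, ht, j, rfl⟩

lemma adomF_oplusG {n : ℕ} (s t : GState D n U) :
    adomF (oplusG s t) = adomF s ∪ adomF t := by
  simp only [adomF, oplusG, Inst.adom_oplus, Set.iUnion_union_distrib]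

lemma Inst.adom_map {f : U → U'} (I : Inst D U) : (I.map f).adom = f '' I.adom := by
  ext u
  constructor
  · rintro ⟨r, t, ⟨t₀, ht₀, rfl⟩, j, rfl⟩
    exact ⟨t₀ j, mem_adom_of_rel ht₀ j, rfl⟩
  · rintro ⟨v, ⟨r, t, ht, j, rfl⟩, rfl⟩
    exact ⟨r, f ∘ t, ⟨t, ht, rfl⟩, j, rfl⟩

/-- mapped global state -/
def mapG {n : ℕ} (f : U → U') (s : GState D n U) : GState D n U' := fun i => (s i).map f

lemma adomF_mapG {n : ℕ} (f : U → U') (s : GState D n U) :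
    adomF (mapG f s) = f '' adomF s := by
  simp only [adomF, mapG, Inst.adom_map, Set.image_iUnion]

end AuxBasic

section AuxWitness

variable {D : Schema} {C U U' U'' : Type} {X : Type}
variable {cst : C → U} {cst' : C → U'} {cst'' : C → U''}

lemma domc_eq (s : X → Inst D U) : adomF s ∪ Set.range cst = domc cst s := rfl

lemma IsWitness.bijOn {ι : U → U'} {s : X → Inst D U} {s' : X → Inst D U'}
    (h : IsWitness cst cst' ι s s') : Set.BijOn ι (domc cst s) (domc cst' s') := h.1

lemma witness_id (s : X → Inst D U) : IsWitness cst cst id s s :=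
  ⟨Set.bijOn_id _, fun _ => rfl, fun _ _ _ _ => Iff.rfl⟩

lemma witness_eqOn {f g : U → U'} {s : X → Inst D U} {s' : X → Inst D U'}
    (hfg : Set.EqOn g f (domc cst s)) (h : IsWitness cst cst' f s s') :
    IsWitness cst cst' g s s' := by
  refine ⟨h.1.congr hfg.symm, fun c => ?_, fun i r t ht => ?_⟩
  · rw [hfg (Or.inr ⟨c, rfl⟩)]; exact h.2.1 c
  · have : (fun j => g (t j)) = fun j => f (t j) := funext fun j => hfg (ht j)
    rw [this]; exact h.2.2 i r t ht

lemma witness_comp {f : U → U'} {g : U' → U''} {s : X → Inst D U}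
    {s' : X → Inst D U'} {s'' : X → Inst D U''}
    (hf : IsWitness cst cst' f s s') (hg : IsWitness cst' cst'' g s' s'') :
    IsWitness cst cst'' (g ∘ f) s s'' := by
  refine ⟨hg.1.comp hf.1, fun c => ?_, fun i r t ht => ?_⟩
  · show g (f (cst c)) = cst'' c
    rw [hf.2.1 c, hg.2.1 c]
  · have h1 := hf.2.2 i r t ht
    have h2 := hg.2.2 i r (fun j => f (t j)) (fun j => hf.1.mapsTo (ht j))
    exact h1.trans h2

lemma IsWitness.adom_image {f : U → U'} {s : X → Inst D U} {s' : X → Inst D U'}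
    (h : IsWitness cst cst' f s s') : f '' adomF s = adomF s' := by
  apply Set.Subset.antisymm
  · rintro _ ⟨u, hu, rfl⟩
    obtain ⟨i, hiu⟩ := Set.mem_iUnion.1 hu
    obtain ⟨r, t, ht, j, rfl⟩ := hiu
    have hmem : ∀ j', t j' ∈ adomF s ∪ Set.range cst :=
      fun j' => Or.inl (mem_adomF_of_rel ht j')
    exact mem_adomF_of_rel ((h.2.2 i r t hmem).1 ht) j
  · intro u' hu'
    obtain ⟨i, hiu⟩ := Set.mem_iUnion.1 hu'
    obtain ⟨r, t', ht', j, rfl⟩ := hiu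
    have hsurj : ∀ j', ∃ v ∈ domc cst s, f v = t' j' := by
      intro j'
      exact h.1.surjOn (Or.inl (mem_adomF_of_rel ht' j'))
    choose t htmem htval using hsurj
    have heq : (fun j' => f (t j')) = t' := funext htval
    have : t ∈ (s i).rel r := (h.2.2 i r t htmem).2 (heq ▸ ht')
    exact ⟨t j, mem_adomF_of_rel this j, htval j⟩

lemma witness_invFunOn [Nonempty U] {f : U → U'} {s : X → Inst D U} {s' : X → Inst D U'}
    (h : IsWitness cst cst' f s s') {A : Set U} (hd : domc cst s ⊆ A)
    (hinj : Set.InjOn f A) : IsWitness cst' cst (Function.invFunOn f A) s' s := by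
  set g := Function.invFunOn f A with hg
  have hleft : ∀ a ∈ domc cst s, g (f a) = a :=
    fun a ha => hinj.leftInvOn_invFunOn (hd ha)
  have hright : ∀ y ∈ domc cst' s', f (g y) = y ∧ g y ∈ domc cst s := by
    intro y hy
    obtain ⟨a, ha, rfl⟩ := h.1.surjOn hy
    rw [hleft a ha]
    exact ⟨rfl, ha⟩
  refine ⟨⟨fun y hy => (hright y hy).2, ?_, ?_⟩, fun c => ?_, fun i r t' ht' => ?_⟩
  · intro y1 h1 y2 h2 he
    rw [← (hright y1 h1).1, ← (hright y2 h2).1, he]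
  · intro a ha
    exact ⟨f a, h.1.mapsTo ha, hleft a ha⟩
  · rw [← h.2.1 c, hleft _ (Or.inr ⟨c, rfl⟩)]
  · have hmem : ∀ j, g (t' j) ∈ domc cst s := fun j => (hright _ (ht' j)).2
    have heq : (fun j => f (g (t' j))) = t' := funext fun j => (hright _ (ht' j)).1
    have := h.2.2 i r (fun j => g (t' j)) hmem
    rw [heq] at this
    exact this.symm

lemma witness_mapG {n : ℕ} {f : U → U'} {s : GState D n U}
    (hinj : Set.InjOn f (domc cst s)) (hc : ∀ c, f (cst c) = cst' c) :
    IsWitness cst cst' f s (mapG f s) := by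
  have himg : f '' domc cst s = domc cst' (mapG f s) := by
    unfold domc
    rw [Set.image_union, adomF_mapG]
    congr 1
    rw [← Set.range_comp]
    exact congrArg _ (funext hc)
  refine ⟨?_, hc, fun i r t ht => ?_⟩
  · show Set.BijOn f (domc cst s) (domc cst' (mapG f s))
    rw [← himg]
    exact hinj.bijOn_image
  constructor
  · intro hmem
    exact ⟨t, hmem, rfl⟩
  · rintro ⟨v, hv, hfv⟩
    have hveq : v = t := by
      funext j
      have hvj : v j ∈ domc cst s := Or.inl (mem_adomF_of_rel hv j)
      have : f (v j) = f (t j) := congrFun hfv j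
      exact hinj hvj (ht j) this
    exact hveq ▸ hv

lemma domc_subset_oplus_left {n : ℕ} (s t : GState D n U) :
    domc cst s ⊆ domc cst (oplusG s t) := by
  unfold domc
  rw [adomF_oplusG]
  exact Set.union_subset_union_left _ Set.subset_union_left

lemma domc_subset_oplus_right {n : ℕ} (s t : GState D n U) :
    domc cst t ⊆ domc cst (oplusG s t) := by
  unfold domc
  rw [adomF_oplusG]
  exact Set.union_subset_union_left _ Set.subset_union_right

lemma domc_oplus_eq {n : ℕ} (s t : GState D n U) :
    domc cst (oplusG s t) = adomF s ∪ adomF t ∪ Set.range cst := by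
  unfold domc; rw [adomF_oplusG]

lemma witness_oplus_glue {n : ℕ} {f : U → U'} {s t : GState D n U}
    {s' t' : GState D n U'}
    (hinj : Set.InjOn f (adomF s ∪ adomF t ∪ Set.range cst))
    (hs : IsWitness cst cst' f s s') (ht : IsWitness cst cst' f t t') :
    IsWitness cst cst' f (oplusG s t) (oplusG s' t') := by
  have hbig : ∀ {Y : GState D n U}, (Y = s ∨ Y = t) →
      domc cst Y ⊆ adomF s ∪ adomF t ∪ Set.range cst := by
    rintro Y (rfl | rfl) <;> unfold domc
    · exact Set.union_subset_union_left _ Set.subset_union_left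
    · exact Set.union_subset_union_left _ Set.subset_union_right
  have hfresh : ∀ {Y : GState D n U} {Y' : GState D n U'}, IsWitness cst cst' f Y Y' →
      (Y = s ∨ Y = t) →
      ∀ v ∈ adomF s ∪ adomF t ∪ Set.range cst, v ∉ domc cst Y → f v ∉ domc cst' Y' := by
    intro Y Y' hY hor v hv hvY hfvY
    obtain ⟨w, hw, hfw⟩ := hY.1.surjOn hfvY
    exact hvY (hinj (hbig hor hw) hv hfw ▸ hw)
  have himg : f '' (adomF s ∪ adomF t ∪ Set.range cst)
      = adomF s' ∪ adomF t' ∪ Set.range cst' := by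
    rw [Set.image_union, Set.image_union, hs.adom_image, ht.adom_image]
    congr 1
    rw [← Set.range_comp]
    exact congrArg _ (funext hs.2.1)
  refine ⟨?_, hs.2.1, ?_⟩
  · show Set.BijOn f (domc cst (oplusG s t)) (domc cst' (oplusG s' t'))
    rw [domc_oplus_eq, domc_oplus_eq, ← himg]
    exact hinj.bijOn_image
  · intro i r v hv
    rw [domc_eq, domc_oplus_eq] at hv
    have hcase : ∀ {Y : GState D n U} {Y' : GState D n U'}, IsWitness cst cst' f Y Y' →
        (Y = s ∨ Y = t) → ∀ (r₀ : D.Rel) (v : Fin (D.arity r₀) → U),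
        (∀ j, v j ∈ adomF s ∪ adomF t ∪ Set.range cst) →
        (v ∈ (Y i).rel r₀ ↔ (fun j => f (v j)) ∈ (Y' i).rel r₀) := by
      intro Y Y' hY hor r₀ v hv
      by_cases hall : ∀ j, v j ∈ domc cst Y
      · exact hY.2.2 i r₀ v hall
      · push_neg at hall
        obtain ⟨j, hj⟩ := hall
        constructor
        · intro hmem
          exact absurd (Or.inl (mem_adomF_of_rel hmem j) : v j ∈ domc cst Y) hj
        · intro hmem
          exact absurd (Or.inl (mem_adomF_of_rel hmem j) : f (v j) ∈ domc cst' Y')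
            (hfresh hY hor (v j) (hv j) hj)
    cases r with
    | inl r₀ => exact hcase hs (Or.inl rfl) r₀ v hv
    | inr r₀ => exact hcase ht (Or.inr rfl) r₀ v hv

lemma witness_oplus_right {n : ℕ} {f : U → U'} {s t : GState D n U}
    {s' t' : GState D n U'}
    (h : IsWitness cst cst' f (oplusG s t) (oplusG s' t')) :
    IsWitness cst cst' f t t' := by
  have hrel : ∀ (i : Fin (n+1)) (r : D.Rel) (v : Fin (D.arity r) → U),
      (∀ j, v j ∈ domc cst (oplusG s t)) →
      (v ∈ (t i).rel r ↔ (fun j => f (v j)) ∈ (t' i).rel r) :=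
    fun i r v hv => h.2.2 i (Sum.inr r) v hv
  have himg : f '' adomF t = adomF t' := by
    apply Set.Subset.antisymm
    · rintro _ ⟨u, hu, rfl⟩
      obtain ⟨i, hiu⟩ := Set.mem_iUnion.1 hu
      obtain ⟨r, v, hvr, j, rfl⟩ := hiu
      have hmem : ∀ j', v j' ∈ domc cst (oplusG s t) :=
        fun j' => domc_subset_oplus_right s t (Or.inl (mem_adomF_of_rel hvr j'))
      exact mem_adomF_of_rel ((hrel i r v hmem).1 hvr) j
    · intro u' hu'
      obtain ⟨i, hiu⟩ := Set.mem_iUnion.1 hu'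
      obtain ⟨r, v', hv', j, rfl⟩ := hiu
      have hsurj : ∀ j', ∃ w ∈ domc cst (oplusG s t), f w = v' j' := by
        intro j'
        exact h.1.surjOn (domc_subset_oplus_right s' t'
          (Or.inl (mem_adomF_of_rel hv' j')))
      choose w hwmem hwval using hsurj
      have heq : (fun j' => f (w j')) = v' := funext hwval
      have : w ∈ (t i).rel r := (hrel i r w hwmem).2 (heq ▸ hv')
      exact ⟨w j, mem_adomF_of_rel this j, hwval j⟩
  refine ⟨⟨?_, h.1.injOn.mono (domc_subset_oplus_right s t), ?_⟩, h.2.1, ?_⟩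
  · rintro u (hu | ⟨c, rfl⟩)
    · exact Or.inl (himg ▸ ⟨u, hu, rfl⟩)
    · exact Or.inr (h.2.1 c ▸ ⟨c, rfl⟩)
  · rintro u' (hu' | ⟨c, rfl⟩)
    · have hu2 : u' ∈ f '' adomF t := by rw [himg]; exact hu'
      obtain ⟨u, hu, rfl⟩ := hu2
      exact ⟨u, Or.inl hu, rfl⟩
    · exact ⟨cst c, Or.inr ⟨c, rfl⟩, h.2.1 c⟩
  · intro i r v hv
    exact hrel i r v fun j => domc_subset_oplus_right s t (hv j)

lemma witness_oplus_left {n : ℕ} {f : U → U'} {s t : GState D n U}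
    {s' t' : GState D n U'}
    (h : IsWitness cst cst' f (oplusG s t) (oplusG s' t')) :
    IsWitness cst cst' f s s' := by
  have hrel : ∀ (i : Fin (n+1)) (r : D.Rel) (v : Fin (D.arity r) → U),
      (∀ j, v j ∈ domc cst (oplusG s t)) →
      (v ∈ (s i).rel r ↔ (fun j => f (v j)) ∈ (s' i).rel r) :=
    fun i r v hv => h.2.2 i (Sum.inl r) v hv
  have himg : f '' adomF s = adomF s' := by
    apply Set.Subset.antisymm
    · rintro _ ⟨u, hu, rfl⟩
      obtain ⟨i, hiu⟩ := Set.mem_iUnion.1 hu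
      obtain ⟨r, v, hvr, j, rfl⟩ := hiu
      have hmem : ∀ j', v j' ∈ domc cst (oplusG s t) :=
        fun j' => domc_subset_oplus_left s t (Or.inl (mem_adomF_of_rel hvr j'))
      exact mem_adomF_of_rel ((hrel i r v hmem).1 hvr) j
    · intro u' hu'
      obtain ⟨i, hiu⟩ := Set.mem_iUnion.1 hu'
      obtain ⟨r, v', hv', j, rfl⟩ := hiu
      have hsurj : ∀ j', ∃ w ∈ domc cst (oplusG s t), f w = v' j' := by
        intro j'
        exact h.1.surjOn (domc_subset_oplus_left s' t'
          (Or.inl (mem_adomF_of_rel hv' j')))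
      choose w hwmem hwval using hsurj
      have heq : (fun j' => f (w j')) = v' := funext hwval
      have : w ∈ (s i).rel r := (hrel i r w hwmem).2 (heq ▸ hv')
      exact ⟨w j, mem_adomF_of_rel this j, hwval j⟩
  refine ⟨⟨?_, h.1.injOn.mono (domc_subset_oplus_left s t), ?_⟩, h.2.1, ?_⟩
  · rintro u (hu | ⟨c, rfl⟩)
    · exact Or.inl (himg ▸ ⟨u, hu, rfl⟩)
    · exact Or.inr (h.2.1 c ▸ ⟨c, rfl⟩)
  · rintro u' (hu' | ⟨c, rfl⟩)
    · have hu2 : u' ∈ f '' adomF s := by rw [himg]; exact hu'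
      obtain ⟨u, hu, rfl⟩ := hu2
      exact ⟨u, Or.inl hu, rfl⟩
    · exact ⟨cst c, Or.inr ⟨c, rfl⟩, h.2.1 c⟩
  · intro i r v hv
    exact hrel i r v fun j => domc_subset_oplus_left s t (hv j)

end AuxWitness

section Good

variable {D : Schema} {C U U' : Type} {n : ℕ}

/-- Explicit form of equivalent assignments: the map `γ` is carried around. -/
def GoodW (cst : C → U) (cst' : C → U') (V : Set ℕ) (γ : U → U')
    (σ : ℕ → U) (σ' : ℕ → U') (s : GState D n U) (s' : GState D n U') : Prop :=
  IsWitness cst cst' γ s s' ∧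
  Set.BijOn γ (domc cst s ∪ σ '' V) (domc cst' s' ∪ σ' '' V) ∧
  ∀ x ∈ V, σ' x = γ (σ x)

variable {cst : C → U} {cst' : C → U'} {V : Set ℕ} {γ : U → U'}
  {σ : ℕ → U} {σ' : ℕ → U'} {s : GState D n U} {s' : GState D n U'}

lemma Set.BijOn.subset_restrict {α β : Type} {f : α → β} {S T : Set α} {S' T' : Set β}
    (h : Set.BijOn f S S') (hsub : T ⊆ S) (himg : f '' T = T') : Set.BijOn f T T' := by
  refine ⟨fun x hx => himg ▸ ⟨x, hx, rfl⟩, h.injOn.mono hsub, fun y hy => ?_⟩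
  rw [← himg] at hy
  obtain ⟨x, hx, rfl⟩ := hy
  exact ⟨x, hx, rfl⟩

lemma GoodW.fresh_out (h : GoodW cst cst' V γ σ σ' s s') {v : U}
    (hv : v ∈ domc cst s ∪ σ '' V) (hns : v ∉ domc cst s) : γ v ∉ domc cst' s' := by
  intro hmem
  obtain ⟨w, hw, hfw⟩ := h.1.1.surjOn hmem
  exact hns (h.2.1.injOn (Or.inl hw) hv hfw ▸ hw)

lemma GoodW.update (h : GoodW cst cst' V γ σ σ' s s') {x : ℕ} (hx : x ∈ V)
    {u : U} (hu : u ∈ adomF s) :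
    GoodW cst cst' V γ (Function.update σ x u) (Function.update σ' x (γ u)) s s' := by
  have hcomp : ∀ y ∈ V, Function.update σ' x (γ u) y = γ (Function.update σ x u y) := by
    intro y hy
    by_cases hyx : y = x
    · subst hyx; simp
    · rw [Function.update_of_ne hyx, Function.update_of_ne hyx]
      exact h.2.2 y hy
  refine ⟨h.1, ?_, hcomp⟩
  have hsub : domc cst s ∪ Function.update σ x u '' V ⊆ domc cst s ∪ σ '' V := by
    rintro v (hv | ⟨y, hy, rfl⟩)
    · exact Or.inl hv
    · by_cases hyx : y = x
      · subst hyx; rw [Function.update_self]; exact Or.inl (Or.inl hu)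
      · rw [Function.update_of_ne hyx]; exact Or.inr ⟨y, hy, rfl⟩
  apply h.2.1.subset_restrict hsub
  apply Set.Subset.antisymm
  · rintro _ ⟨v, (hv | ⟨y, hy, rfl⟩), rfl⟩
    · exact Or.inl (h.1.1.mapsTo hv)
    · exact Or.inr ⟨y, hy, hcomp y hy⟩
  · rintro w (hw | ⟨y, hy, rfl⟩)
    · obtain ⟨v, hv, rfl⟩ := h.1.1.surjOn hw
      exact ⟨v, Or.inl hv, rfl⟩
    · exact ⟨Function.update σ x u y, Or.inr ⟨y, hy, rfl⟩, (hcomp y hy).symm⟩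

lemma GoodW.symm [Nonempty U] (h : GoodW cst cst' V γ σ σ' s s') :
    GoodW cst' cst V (Function.invFunOn γ (domc cst s ∪ σ '' V)) σ' σ s' s := by
  set B := domc cst s ∪ σ '' V with hB
  set g := Function.invFunOn γ B with hg
  have hleft : ∀ a ∈ B, g (γ a) = a := fun a ha => h.2.1.injOn.leftInvOn_invFunOn ha
  refine ⟨witness_invFunOn h.1 Set.subset_union_left h.2.1.injOn, ?_, ?_⟩
  · exact Set.BijOn.symm (h.2.1.invOn_invFunOn).symm h.2.1
  · intro x hx
    rw [h.2.2 x hx, hleft _ (Or.inr ⟨x, hx, rfl⟩)]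

end Good

section FOTransfer

variable {D : Schema} {C U U' : Type} {n : ℕ} {cst : C → U} {cst' : C → U'} {V : Set ℕ}
variable {s : GState D n U} {s' : GState D n U'}

lemma term_val_mem {σ : ℕ → U} {t : Term C} (ht : ↑t.varsF ⊆ V) :
    t.val cst σ ∈ Set.range cst ∪ σ '' V := by
  cases t with
  | inl x => exact Or.inr ⟨x, ht (Finset.mem_coe.2 (Finset.mem_singleton_self x)), rfl⟩
  | inr c => exact Or.inl ⟨c, rfl⟩

lemma term_val_map {γ : U → U'} {σ : ℕ → U} {σ' : ℕ → U'}
    (h : GoodW cst cst' V γ σ σ' s s') {t : Term C} (ht : ↑t.varsF ⊆ V) :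
    γ (t.val cst σ) = t.val cst' σ' := by
  cases t with
  | inl x => exact (h.2.2 x (ht (Finset.mem_coe.2 (Finset.mem_singleton_self x)))).symm
  | inr c => exact h.1.2.1 c

lemma range_subset_domc (cst : C → U) (s : GState D n U) :
    Set.range cst ⊆ domc cst s := Set.subset_union_right

lemma fo_transfer (ψ : FO D C) :
    ∀ {γ : U → U'} {σ : ℕ → U} {σ' : ℕ → U'},
    GoodW cst cst' V γ σ σ' s s' → ↑ψ.vars ⊆ V →
    (FO.sat cst (gInst s) σ ψ ↔ FO.sat cst' (gInst s') σ' ψ) := by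
  induction ψ with
  | eq t₁ t₂ =>
    intro γ σ σ' h hv
    rw [FO.vars, Finset.coe_union, Set.union_subset_iff] at hv
    show t₁.val cst σ = t₂.val cst σ ↔ t₁.val cst' σ' = t₂.val cst' σ'
    rw [← term_val_map h hv.1, ← term_val_map h hv.2]
    constructor
    · intro he; rw [he]
    · intro he
      have hm : ∀ t : Term C, ↑t.varsF ⊆ V → t.val cst σ ∈ domc cst s ∪ σ '' V := by
        intro t ht
        rcases term_val_mem (cst := cst) (σ := σ) ht with hc | hx
        · exact Or.inl (range_subset_domc cst s hc)
        · exact Or.inr hx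
      exact h.2.1.injOn (hm t₁ hv.1) (hm t₂ hv.2) he
  | rel r ts =>
    intro γ σ σ' h hv
    rw [FO.vars] at hv
    have hts : ∀ j, ↑(ts j).varsF ⊆ V := by
      intro j x hx
      exact hv (Finset.mem_coe.2 (Finset.mem_biUnion.2 ⟨j, Finset.mem_univ j, hx⟩))
    show (fun j => (ts j).val cst σ) ∈ (gInst s).rel r ↔
      (fun j => (ts j).val cst' σ') ∈ (gInst s').rel r
    have hmap : (fun j => (ts j).val cst' σ') = fun j => γ ((ts j).val cst σ) :=
      funext fun j => (term_val_map h (hts j)).symm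
    rw [hmap]
    have hmem : ∀ j, (ts j).val cst σ ∈ domc cst s ∪ σ '' V := by
      intro j
      rcases term_val_mem (cst := cst) (σ := σ) (hts j) with hc | hx
      · exact Or.inl (range_subset_domc cst s hc)
      · exact Or.inr hx
    by_cases hall : ∀ j, (ts j).val cst σ ∈ domc cst s
    · constructor
      · intro hmem'
        obtain ⟨i, hi⟩ := Set.mem_iUnion.1 hmem'
        exact Set.mem_iUnion.2 ⟨i, (h.1.2.2 i r _ hall).1 hi⟩
      · intro hmem'
        obtain ⟨i, hi⟩ := Set.mem_iUnion.1 hmem'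
        exact Set.mem_iUnion.2 ⟨i, (h.1.2.2 i r _ hall).2 hi⟩
    · push_neg at hall
      obtain ⟨j, hj⟩ := hall
      constructor
      · intro hmem'
        obtain ⟨i, hi⟩ := Set.mem_iUnion.1 hmem'
        exact absurd (Or.inl (mem_adom_of_rel hi j) : _ ∈ (s i).adom ∪ Set.range cst)
          (fun hh => hj (by
            rcases hh with hh | hh
            · exact Or.inl (Set.mem_iUnion.2 ⟨i, hh⟩)
            · exact Or.inr hh))
      · intro hmem'
        obtain ⟨i, hi⟩ := Set.mem_iUnion.1 hmem'
        have : γ ((ts j).val cst σ) ∈ domc cst' s' :=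
          Or.inl (mem_adomF_of_rel hi j)
        exact absurd this (h.fresh_out (hmem j) hj)
  | not ψ ih =>
    intro γ σ σ' h hv
    exact not_congr (ih h hv)
  | imp ψ₁ ψ₂ ih₁ ih₂ =>
    intro γ σ σ' h hv
    rw [FO.vars, Finset.coe_union, Set.union_subset_iff] at hv
    exact imp_congr (ih₁ h hv.1) (ih₂ h hv.2)
  | all x ψ ih =>
    intro γ σ σ' h hv
    rw [FO.vars, Finset.coe_insert, Set.insert_subset_iff] at hv
    show (∀ u ∈ (gInst s).adom, _) ↔ (∀ u' ∈ (gInst s').adom, _)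
    rw [adom_gInst, adom_gInst]
    constructor
    · intro hl u' hu'
      have : u' ∈ γ '' adomF s := h.1.adom_image ▸ hu'
      obtain ⟨u, hu, rfl⟩ := this
      exact (ih (h.update hv.1 hu) hv.2).1 (hl u hu)
    · intro hr u hu
      have hgu : γ u ∈ adomF s' := h.1.adom_image ▸ ⟨u, hu, rfl⟩
      exact (ih (h.update hv.1 hu) hv.2).2 (hr (γ u) hgu)

end FOTransfer

section Runs

variable {D : Schema} {C : Type} {n : ℕ} {sig : Fin (n+1) → AgentSig} {U : Type}
  {Ag : ∀ i, Agent D (sig i) U} {M : ACMAS D sig Ag}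

lemma tr_mem_right {s t : GState D n U} (hs : s ∈ M.S) (h : M.Tr s t) : t ∈ M.S := by
  obtain ⟨a, ha⟩ := h
  exact M.tau_closed s hs a ha

lemma epiAny_mem_right {s t : GState D n U} (h : M.EpiAny s t) : t ∈ M.S := by
  obtain ⟨i, hi⟩ := h
  exact hi.2.1

lemma exists_run_from (hM : M.Std) {s : GState D n U} (hs : s ∈ M.S) :
    ∃ r, M.IsRun r ∧ r 0 = s := by
  have hnext : ∀ u : {x // x ∈ M.S}, ∃ v : {x // x ∈ M.S}, M.Tr u.1 v.1 := by
    intro u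
    obtain ⟨t, ht⟩ := hM.1 u.1 u.2
    exact ⟨⟨t, tr_mem_right u.2 ht⟩, ht⟩
  choose f hf using hnext
  let g : ℕ → {x // x ∈ M.S} := fun k => Nat.rec ⟨s, hs⟩ (fun _ u => f u) k
  exact ⟨fun k => (g k).1, ⟨fun k => (g k).2, fun k => hf (g k)⟩, rfl⟩

lemma run_cons (hM : M.Std) {s t : GState D n U} (hs : s ∈ M.S) (hst : M.Tr s t) :
    ∃ r, M.IsRun r ∧ r 0 = s ∧ r 1 = t := by
  obtain ⟨r₀, hr₀, hr₀0⟩ := exists_run_from hM (tr_mem_right hs hst)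
  refine ⟨fun k => Nat.casesOn k s (fun k' => r₀ k'), ⟨?_, ?_⟩, rfl, hr₀0⟩
  · intro k; cases k with
    | zero => exact hs
    | succ k' => exact hr₀.1 k'
  · intro k; cases k with
    | zero => show M.Tr s (r₀ 0); rw [hr₀0]; exact hst
    | succ k' => exact hr₀.2 k'

lemma exists_path (hM : M.Std) {s : GState D n U} (hs : s ∈ M.S) :
    ∃ (k : ℕ) (p : ℕ → GState D n U), p 0 = M.s0 ∧ p k = s ∧
      (∀ j < k, M.Tr (p j) (p (j+1))) ∧ ∀ j ≤ k, p j ∈ M.S := by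
  have hreach : Relation.ReflTransGen M.Tr M.s0 s := by
    have := hM.2 ▸ hs; exact this
  clear hs
  induction hreach with
  | refl => exact ⟨0, fun _ => M.s0, rfl, rfl, fun j hj => absurd hj (Nat.not_lt_zero j),
      fun j hj => Nat.le_zero.1 hj ▸ M.s0_mem⟩
  | @tail b c hab hbc ih =>
    obtain ⟨k, p, hp0, hpk, hstep, hmem⟩ := ih
    refine ⟨k+1, fun j => if j ≤ k then p j else c, ?_, ?_, ?_, ?_⟩
    · simpa using hp0
    · simp
    · intro j hj
      rcases Nat.lt_succ_iff_lt_or_eq.1 hj with hjk | rfl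
      · have h1 : j ≤ k := le_of_lt hjk
        have h2 : j+1 ≤ k := hjk
        simp only [if_pos h1, if_pos h2]
        exact hstep j hjk
      · simp only [if_pos (le_refl j), if_neg (Nat.not_succ_le_self j)]
        rw [hpk]; exact hbc
    · intro j hj
      by_cases hjk : j ≤ k
      · simp only [if_pos hjk]; exact hmem j hjk
      · simp only [if_neg hjk]
        have hb : b ∈ M.S := hpk ▸ hmem k (le_refl k)
        exact tr_mem_right hb hbc

lemma exists_terun_through (hM : M.Std) {s t : GState D n U} (hs : s ∈ M.S)
    (he : M.Tr s t ∨ M.EpiAny s t) :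
    ∃ (r : ℕ → GState D n U) (k : ℕ), M.IsTERun r ∧ r 0 = M.s0 ∧ r k = s ∧ r (k+1) = t := by
  have htS : t ∈ M.S := by
    rcases he with h | h
    · exact tr_mem_right hs h
    · exact epiAny_mem_right h
  obtain ⟨r₂, hr₂, hr₂0⟩ := exists_run_from hM htS
  obtain ⟨k, p, hp0, hpk, hstep, hmem⟩ := exists_path hM hs
  refine ⟨fun j => if j ≤ k then p j else r₂ (j - (k+1)), k, ⟨?_, ?_⟩, ?_, ?_, ?_⟩
  · intro j
    by_cases hjk : j ≤ k
    · simp only [if_pos hjk]; exact hmem j hjk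
    · simp only [if_neg hjk]; exact hr₂.1 _
  · intro j
    rcases lt_trichotomy j k with hjk | rfl | hjk
    · have h1 : j ≤ k := le_of_lt hjk
      have h2 : j + 1 ≤ k := hjk
      simp only [if_pos h1, if_pos h2]
      exact Or.inl (hstep j hjk)
    · simp only [if_pos (le_refl j), if_neg (Nat.not_succ_le_self j),
        Nat.add_sub_cancel_left, hpk]
      have : j + 1 - (j + 1) = 0 := by omega
      rw [this, hr₂0]
      exact he
    · have h1 : ¬ j ≤ k := by omega
      have h2 : ¬ j + 1 ≤ k := by omega
      simp only [if_neg h1, if_neg h2]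
      have h3 : j + 1 - (k+1) = (j - (k+1)) + 1 := by omega
      rw [h3]
      exact Or.inl (hr₂.2 _)
  · have h0 : (0:ℕ) ≤ k := Nat.zero_le k
    simp only [if_pos h0]; exact hp0
  · simp only [if_pos (le_refl k)]; exact hpk
  · simp only [if_neg (Nat.not_succ_le_self k)]
    have : k + 1 - (k+1) = 0 := by omega
    rw [this, hr₂0]

lemma actElems_finite (a : JAct sig U) : (actElems a).Finite := by
  have : actElems a ⊆ ⋃ i, Set.range (a i).2 := by
    rintro u ⟨i, j, rfl⟩
    exact Set.mem_iUnion.2 ⟨i, j, rfl⟩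
  exact Set.Finite.subset (Set.finite_iUnion fun i => Set.finite_range _) this

end Runs

section StepLemmas

variable {D : Schema} {C : Type} [Fintype C] {n : ℕ}
  {sig sig' : Fin (n+1) → AgentSig} {U U' : Type}
  {cst : C → U} {cst' : C → U'}
  {Ag : ∀ i, Agent D (sig i) U} {Ag' : ∀ i, Agent D (sig' i) U'}
  {M : ACMAS D sig Ag} {M' : ACMAS D sig' Ag'}

lemma uniform_step [Nonempty U] (huT : UniformT cst M)
    {s t s' t' : GState D n U} {a : JAct sig U}
    (hsS : s ∈ M.S) (htS : t ∈ M.S) (hs'S : s' ∈ M.S) (hta : t ∈ M.τ s a)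
    {ι : U → U} (hι : IsWitness cst cst ι (oplusG s t) (oplusG s' t')) :
    M.Tr s' t' := by
  have hBfin : (domc cst (oplusG s t) ∪ actElems a).Finite :=
    (domc_finite cst _).union (actElems_finite a)
  obtain ⟨ι', heq, hinj⟩ := exists_injOn_extension Set.subset_union_left
    hBfin hι.1.injOn (Cardinal.mk_set_le _)
  refine ⟨JAct.map ι' a, huT s hsS t htS s' hs'S t' a hta ι hι ι'
    (fun u hu => heq hu) hinj (fun c => ?_)⟩
  exact (heq (Or.inr ⟨c, rfl⟩)).trans (hι.2.1 c)

lemma descend_trans [Nonempty U] (huM : Uniform cst M)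
    {s t s₀ : GState D n U} {ν : U → U}
    (hsS : s ∈ M.S) (hs₀S : s₀ ∈ M.S) (hν : IsWitness cst cst ν s s₀)
    (htr : M.Tr s t) :
    ∃ (t₀ : GState D n U) (lf : U → U), M.Tr s₀ t₀ ∧ t₀ ∈ M.S ∧ t ∈ M.S ∧
      IsWitness cst cst lf (oplusG s t) (oplusG s₀ t₀) := by
  obtain ⟨a, hta⟩ := htr
  have htS : t ∈ M.S := M.tau_closed s hsS a hta
  obtain ⟨lf, heq, hinj⟩ := exists_injOn_extension (domc_subset_oplus_left s t)
    (domc_finite cst _) hν.1.injOn (Cardinal.mk_set_le _)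
  have hlf_s : IsWitness cst cst lf s s₀ := witness_eqOn heq hν
  have hconst : ∀ c, lf (cst c) = cst c := fun c =>
    (heq (Or.inr ⟨c, rfl⟩)).trans (hν.2.1 c)
  have hlf_t : IsWitness cst cst lf t (mapG lf t) :=
    witness_mapG (hinj.mono (domc_subset_oplus_right s t)) hconst
  have hglue : IsWitness cst cst lf (oplusG s t) (oplusG s₀ (mapG lf t)) :=
    witness_oplus_glue (by rw [← domc_oplus_eq]; exact hinj) hlf_s hlf_t
  have htr₀ : M.Tr s₀ (mapG lf t) :=
    uniform_step huM.1 hsS htS hs₀S hta hglue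
  exact ⟨mapG lf t, lf, htr₀, tr_mem_right hs₀S htr₀, htS, hglue⟩

lemma descend_epi [Nonempty U] (huM : Uniform cst M)
    {s t s₀ : GState D n U} {ν : U → U} {i : Fin n}
    (hs₀S : s₀ ∈ M.S) (hν : IsWitness cst cst ν s s₀)
    (hepi : M.Epi i.succ s t) :
    ∃ (t₀ : GState D n U) (lf : U → U), M.Epi i.succ s₀ t₀ ∧ t₀ ∈ M.S ∧ t ∈ M.S ∧
      IsWitness cst cst lf (oplusG s t) (oplusG s₀ t₀) := by
  obtain ⟨hsS, htS, hloc⟩ := hepi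
  obtain ⟨lf, heq, hinj⟩ := exists_injOn_extension (domc_subset_oplus_left s t)
    (domc_finite cst _) hν.1.injOn (Cardinal.mk_set_le _)
  have hlf_s : IsWitness cst cst lf s s₀ := witness_eqOn heq hν
  have hconst : ∀ c, lf (cst c) = cst c := fun c =>
    (heq (Or.inr ⟨c, rfl⟩)).trans (hν.2.1 c)
  have hlf_t : IsWitness cst cst lf t (mapG lf t) :=
    witness_mapG (hinj.mono (domc_subset_oplus_right s t)) hconst
  have hglue : IsWitness cst cst lf (oplusG s t) (oplusG s₀ (mapG lf t)) :=
    witness_oplus_glue (by rw [← domc_oplus_eq]; exact hinj) hlf_s hlf_t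
  have hepi₀ : M.Epi i.succ s₀ (mapG lf t) :=
    huM.2 s hsS t htS s₀ hs₀S (mapG lf t) i ⟨hsS, htS, hloc⟩ ⟨lf, hglue⟩
  exact ⟨mapG lf t, lf, hepi₀, hepi₀.2.1, htS, hglue⟩

lemma ascend {V : Set ℕ} [Nonempty U] [Nonempty U']
    {s t : GState D n U} {s' : GState D n U'} {s₀' t₀' : GState D n U'}
    {ρ : U → U'} {γ : U → U'} {σ : ℕ → U} {σ' : ℕ → U'}
    (hρ : IsWitness cst cst' ρ (oplusG s t) (oplusG s₀' t₀'))
    (hγ : GoodW cst cst' V γ σ σ' s s')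
    (hcard : Cardinal.mk ↥(domc cst (oplusG s t) ∪ σ '' V) ≤ Cardinal.mk U')
    (hVfin : V.Finite) :
    ∃ (t' : GState D n U') (δ : U → U') (ι : U' → U'),
      IsWitness cst' cst' ι (oplusG s₀' t₀') (oplusG s' t') ∧
      GoodW cst cst' V δ σ σ' t t' ∧
      (∃ g : U' → U', IsWitness cst' cst' g t' t₀') := by
  set B := domc cst (oplusG s t) ∪ σ '' V with hB
  have hAB : domc cst s ∪ σ '' V ⊆ B :=
    Set.union_subset_union_left _ (domc_subset_oplus_left s t)
  have hBfin : B.Finite := (domc_finite cst _).union (hVfin.image σ)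
  obtain ⟨δ, heq, hinj⟩ := exists_injOn_extension hAB hBfin hγ.2.1.injOn hcard
  have heq_domc : Set.EqOn δ γ (domc cst s) := fun u hu => heq (Or.inl hu)
  have hδs : IsWitness cst cst' δ s s' := witness_eqOn heq_domc hγ.1
  have hconst : ∀ c, δ (cst c) = cst' c := fun c =>
    (heq (Or.inl (Or.inr ⟨c, rfl⟩))).trans (hγ.1.2.1 c)
  have htsub : domc cst t ⊆ B :=
    (domc_subset_oplus_right s t).trans Set.subset_union_left
  have hδt : IsWitness cst cst' δ t (mapG δ t) :=
    witness_mapG (hinj.mono htsub) hconst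
  have hglue : IsWitness cst cst' δ (oplusG s t) (oplusG s' (mapG δ t)) :=
    witness_oplus_glue (by rw [← domc_oplus_eq]; exact hinj.mono Set.subset_union_left)
      hδs hδt
  have hρinv : IsWitness cst' cst (Function.invFunOn ρ (domc cst (oplusG s t)))
      (oplusG s₀' t₀') (oplusG s t) :=
    witness_invFunOn hρ (subset_refl _) hρ.1.injOn
  have hι : IsWitness cst' cst' (δ ∘ Function.invFunOn ρ (domc cst (oplusG s t)))
      (oplusG s₀' t₀') (oplusG s' (mapG δ t)) := witness_comp hρinv hglue
  have hσmap : ∀ x ∈ V, σ' x = δ (σ x) := by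
    intro x hx
    rw [hγ.2.2 x hx]
    exact (heq (Or.inr ⟨x, hx, rfl⟩) : _).symm
  have hgood : GoodW cst cst' V δ σ σ' t (mapG δ t) := by
    refine ⟨hδt, ?_, hσmap⟩
    have hsub : domc cst t ∪ σ '' V ⊆ B :=
      Set.union_subset_union_left _ (domc_subset_oplus_right s t)
    have hbij : Set.BijOn δ (domc cst t ∪ σ '' V) (δ '' (domc cst t ∪ σ '' V)) :=
      (hinj.mono hsub).bijOn_image
    have himg : δ '' (domc cst t ∪ σ '' V) = domc cst' (mapG δ t) ∪ σ' '' V := by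
      rw [Set.image_union,
        show δ '' domc cst t = domc cst' (mapG δ t) from hδt.1.image_eq]
      congr 1
      ext w
      constructor
      · rintro ⟨_, ⟨x, hx, rfl⟩, rfl⟩
        exact ⟨x, hx, hσmap x hx⟩
      · rintro ⟨x, hx, rfl⟩
        exact ⟨σ x, ⟨x, hx, rfl⟩, (hσmap x hx).symm⟩
    rw [himg] at hbij
    exact hbij
  have hright : IsWitness cst' cst' (δ ∘ Function.invFunOn ρ (domc cst (oplusG s t)))
      t₀' (mapG δ t) := witness_oplus_right hι
  refine ⟨mapG δ t, δ, _, hι, hgood, ⟨_, witness_invFunOn hright (subset_refl _) hright.1.injOn⟩⟩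

set_option linter.unusedSectionVars false in
lemma ascend_card {V : Set ℕ} {σ : ℕ → U} {s t : GState D n U}
    (h : Cardinal.mk ↥(adomF s ∪ adomF t ∪ Set.range cst) + Cardinal.mk ↥V ≤ Cardinal.mk U') :
    Cardinal.mk ↥(domc cst (oplusG s t) ∪ σ '' V) ≤ Cardinal.mk U' := by
  refine le_trans (le_trans (Cardinal.mk_union_le _ _) ?_) h
  rw [domc_oplus_eq]
  exact add_le_add le_rfl (Cardinal.mk_image_le)

/-- The master invariant for the bisimulation-transfer argument. -/
def InvR (cst : C → U) (cst' : C → U') (M : ACMAS D sig Ag) (M' : ACMAS D sig' Ag')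
    (R : GState D n U → GState D n U' → Prop) (V : Set ℕ)
    (s : GState D n U) (s' : GState D n U') (σ : ℕ → U) (σ' : ℕ → U') : Prop :=
  s ∈ M.S ∧ s' ∈ M'.S ∧
  ∃ (s₀ : GState D n U) (s₀' : GState D n U') (ν : U → U) (ν' : U' → U') (γ : U → U'),
    R s₀ s₀' ∧ IsWitness cst cst ν s s₀ ∧ IsWitness cst' cst' ν' s' s₀' ∧
    GoodW cst cst' V γ σ σ' s s'

lemma step_fwd_trans [Nonempty U] [Nonempty U'] {V : Set ℕ}
    {R : GState D n U → GState D n U' → Prop}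
    (hb : IsOBisim cst cst' M M' R)
    (huM : Uniform cst M) (huM' : Uniform cst' M') (hVfin : V.Finite)
    (hbnd : ∀ s t : GState D n U, s ∈ M.S → (M.Tr s t ∨ M.EpiAny s t) →
      Cardinal.mk ↥(adomF s ∪ adomF t ∪ Set.range cst) + Cardinal.mk ↥V ≤ Cardinal.mk U')
    {s t : GState D n U} {s' : GState D n U'} {σ : ℕ → U} {σ' : ℕ → U'}
    (hinv : InvR cst cst' M M' R V s s' σ σ') (htr : M.Tr s t) :
    ∃ t', M'.Tr s' t' ∧ InvR cst cst' M M' R V t t' σ σ' := by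
  obtain ⟨hsS, hs'S, s₀, s₀', ν, ν', γ, hR, hν, hν', hγ⟩ := hinv
  have hsim := hb.1 s₀ s₀' hR
  obtain ⟨t₀, lf, htr₀, ht₀S, htS, hlf⟩ := descend_trans huM hsS hsim.1 hν htr
  obtain ⟨t₀', htr₀', hiso, hRtt⟩ := hsim.2.2.2.1 t₀ htr₀
  obtain ⟨ω, hω⟩ := hiso
  have hρ : IsWitness cst cst' (ω ∘ lf) (oplusG s t) (oplusG s₀' t₀') :=
    witness_comp hlf hω
  obtain ⟨t', δ, ι, hι, hgood, hg⟩ :=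
    ascend hρ hγ (ascend_card (hbnd s t hsS (Or.inl htr))) hVfin
  have ht₀'S : t₀' ∈ M'.S := tr_mem_right hsim.2.1 htr₀'
  have htr' : M'.Tr s' t' := by
    obtain ⟨a', hta'⟩ := htr₀'
    exact uniform_step huM'.1 hsim.2.1 ht₀'S hs'S hta' hι
  exact ⟨t', htr', htS, tr_mem_right hs'S htr', t₀, t₀', _, Classical.choose hg, δ,
    hRtt, witness_oplus_right hlf, Classical.choose_spec hg, hgood⟩

lemma step_fwd_epi [Nonempty U] [Nonempty U'] {V : Set ℕ}
    {R : GState D n U → GState D n U' → Prop}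
    (hb : IsOBisim cst cst' M M' R)
    (huM : Uniform cst M) (huM' : Uniform cst' M') (hVfin : V.Finite)
    (hbnd : ∀ s t : GState D n U, s ∈ M.S → (M.Tr s t ∨ M.EpiAny s t) →
      Cardinal.mk ↥(adomF s ∪ adomF t ∪ Set.range cst) + Cardinal.mk ↥V ≤ Cardinal.mk U')
    {s t : GState D n U} {s' : GState D n U'} {σ : ℕ → U} {σ' : ℕ → U'} {i : Fin n}
    (hinv : InvR cst cst' M M' R V s s' σ σ') (hepi : M.Epi i.succ s t) :
    ∃ t', M'.Epi i.succ s' t' ∧ InvR cst cst' M M' R V t t' σ σ' := by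
  obtain ⟨hsS, hs'S, s₀, s₀', ν, ν', γ, hR, hν, hν', hγ⟩ := hinv
  have hsim := hb.1 s₀ s₀' hR
  obtain ⟨t₀, lf, hepi₀, ht₀S, htS, hlf⟩ := descend_epi huM hsim.1 hν hepi
  obtain ⟨t₀', hepi₀', hiso, hRtt⟩ := hsim.2.2.2.2 t₀ i hepi₀
  obtain ⟨ω, hω⟩ := hiso
  have hρ : IsWitness cst cst' (ω ∘ lf) (oplusG s t) (oplusG s₀' t₀') :=
    witness_comp hlf hω
  obtain ⟨t', δ, ι, hι, hgood, hg⟩ :=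
    ascend hρ hγ (ascend_card (hbnd s t hsS (Or.inr ⟨i, hepi⟩))) hVfin
  have hepi' : M'.Epi i.succ s' t' :=
    huM'.2 s₀' hsim.2.1 t₀' hepi₀'.2.1 s' hs'S t' i hepi₀' ⟨ι, hι⟩
  exact ⟨t', hepi', htS, hepi'.2.1, t₀, t₀', _, Classical.choose hg, δ,
    hRtt, witness_oplus_right hlf, Classical.choose_spec hg, hgood⟩

end StepLemmas

section MatchLemmas

variable {D : Schema} {C : Type} [Fintype C] {n : ℕ}
  {sig sig' : Fin (n+1) → AgentSig} {U U' : Type}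
  {cst : C → U} {cst' : C → U'}
  {Ag : ∀ i, Agent D (sig i) U} {Ag' : ∀ i, Agent D (sig' i) U'}
  {M : ACMAS D sig Ag} {M' : ACMAS D sig' Ag'}
  {R : GState D n U → GState D n U' → Prop} {V : Set ℕ}

set_option linter.unusedSectionVars false

lemma InvR_flip [Nonempty U] [Nonempty U'] {s : GState D n U} {s' : GState D n U'}
    {σ : ℕ → U} {σ' : ℕ → U'}
    (h : InvR cst cst' M M' R V s s' σ σ') :
    InvR cst' cst M' M (fun a b => R b a) V s' s σ' σ := by
  obtain ⟨hsS, hs'S, s₀, s₀', ν, ν', γ, hR, hν, hν', hγ⟩ := h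
  exact ⟨hs'S, hsS, s₀', s₀, ν', ν, _, hR, hν', hν, hγ.symm⟩

lemma match_run [Nonempty U] [Nonempty U']
    (hb : IsOBisim cst cst' M M' R)
    (huM : Uniform cst M) (huM' : Uniform cst' M') (hVfin : V.Finite)
    (hbnd : ∀ s t : GState D n U, s ∈ M.S → (M.Tr s t ∨ M.EpiAny s t) →
      Cardinal.mk ↥(adomF s ∪ adomF t ∪ Set.range cst) + Cardinal.mk ↥V ≤ Cardinal.mk U')
    {s : GState D n U} {s' : GState D n U'} {σ : ℕ → U} {σ' : ℕ → U'}
    (hinv : InvR cst cst' M M' R V s s' σ σ')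
    {r : ℕ → GState D n U} (hr : M.IsRun r) (hr0 : r 0 = s) :
    ∃ r', M'.IsRun r' ∧ r' 0 = s' ∧
      ∀ k, InvR cst cst' M M' R V (r k) (r' k) σ σ' := by
  have hstep' : ∀ (k : ℕ) (p : {u' // InvR cst cst' M M' R V (r k) u' σ σ'}),
      ∃ q : {u' // InvR cst cst' M M' R V (r (k+1)) u' σ σ'}, M'.Tr p.1 q.1 := by
    intro k p
    obtain ⟨v', h1, h2⟩ := step_fwd_trans hb huM huM' hVfin hbnd p.2 (hr.2 k)
    exact ⟨⟨v', h2⟩, h1⟩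
  choose f hf using hstep'
  let g : ∀ k, {u' // InvR cst cst' M M' R V (r k) u' σ σ'} :=
    fun k => Nat.rec ⟨s', by rw [hr0]; exact hinv⟩ (fun k p => f k p) k
  exact ⟨fun k => (g k).1, ⟨fun k => (g k).2.2.1, fun k => hf k (g k)⟩, rfl,
    fun k => (g k).2⟩

lemma match_tg [Nonempty U] [Nonempty U']
    (hb : IsOBisim cst cst' M M' R)
    (huM : Uniform cst M) (huM' : Uniform cst' M') (hVfin : V.Finite)
    (hbnd : ∀ s t : GState D n U, s ∈ M.S → (M.Tr s t ∨ M.EpiAny s t) →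
      Cardinal.mk ↥(adomF s ∪ adomF t ∪ Set.range cst) + Cardinal.mk ↥V ≤ Cardinal.mk U')
    {s t : GState D n U} {s' : GState D n U'} {σ : ℕ → U} {σ' : ℕ → U'}
    (hinv : InvR cst cst' M M' R V s s' σ σ')
    (h : Relation.TransGen M.EpiAny s t) :
    ∃ t', Relation.TransGen M'.EpiAny s' t' ∧
      InvR cst cst' M M' R V t t' σ σ' := by
  induction h with
  | single hst =>
    obtain ⟨i, hi⟩ := hst
    obtain ⟨t', h1, h2⟩ := step_fwd_epi hb huM huM' hVfin hbnd hinv hi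
    exact ⟨t', Relation.TransGen.single ⟨i, h1⟩, h2⟩
  | tail hab hbc ih =>
    obtain ⟨b', hb', hinvb⟩ := ih
    obtain ⟨i, hi⟩ := hbc
    obtain ⟨t', h1, h2⟩ := step_fwd_epi hb huM huM' hVfin hbnd hinvb hi
    exact ⟨t', hb'.tail ⟨i, h1⟩, h2⟩

lemma init_inv [Nonempty U] [Nonempty U']
    (hb : IsOBisim cst cst' M M' R) (hRs0 : R M.s0 M'.s0)
    (hM : M.Std) (hVfin : V.Finite)
    (hbnd : ∀ s t : GState D n U, s ∈ M.S → (M.Tr s t ∨ M.EpiAny s t) →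
      Cardinal.mk ↥(adomF s ∪ adomF t ∪ Set.range cst) + Cardinal.mk ↥V ≤ Cardinal.mk U')
    (σ : ℕ → U) :
    ∃ σ', InvR cst cst' M M' R V M.s0 M'.s0 σ σ' := by
  obtain ⟨g₀, hg₀⟩ := (hb.1 _ _ hRs0).2.2.1
  obtain ⟨t, ht⟩ := hM.1 M.s0 M.s0_mem
  have hcard : Cardinal.mk ↥(domc cst (oplusG M.s0 t) ∪ σ '' V) ≤ Cardinal.mk U' :=
    ascend_card (hbnd M.s0 t M.s0_mem (Or.inl ht))
  have hsub : domc cst M.s0 ∪ σ '' V ⊆ domc cst (oplusG M.s0 t) ∪ σ '' V :=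
    Set.union_subset_union_left _ (domc_subset_oplus_left _ t)
  obtain ⟨γ, heq, hinj⟩ := exists_injOn_extension
    (Set.subset_union_left : domc cst M.s0 ⊆ domc cst M.s0 ∪ σ '' V)
    ((domc_finite cst _).union (hVfin.image σ)) hg₀.1.injOn
    (le_trans (Cardinal.mk_le_mk_of_subset hsub) hcard)
  have hγw : IsWitness cst cst' γ M.s0 M'.s0 := witness_eqOn heq hg₀
  refine ⟨fun x => γ (σ x), M.s0_mem, M'.s0_mem, M.s0, M'.s0, id, id, γ,
    hRs0, witness_id _, witness_id _, hγw, ?_, fun x _ => rfl⟩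
  have hbij := hinj.bijOn_image
  have himg : γ '' (domc cst M.s0 ∪ σ '' V)
      = domc cst' M'.s0 ∪ (fun x => γ (σ x)) '' V := by
    rw [Set.image_union,
      show γ '' domc cst M.s0 = domc cst' M'.s0 from hγw.1.image_eq]
    congr 1
    ext w
    constructor
    · rintro ⟨_, ⟨x, hx, rfl⟩, rfl⟩
      exact ⟨x, hx, rfl⟩
    · rintro ⟨x, hx, rfl⟩
      exact ⟨σ x, ⟨x, hx, rfl⟩, rfl⟩
  rw [himg] at hbij
  exact hbij

end MatchLemmas

section Master

variable {D : Schema} {C : Type} [Fintype C] {n : ℕ}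
  {sig sig' : Fin (n+1) → AgentSig} {U U' : Type}
  {cst : C → U} {cst' : C → U'}
  {Ag : ∀ i, Agent D (sig i) U} {Ag' : ∀ i, Agent D (sig' i) U'}
  {M : ACMAS D sig Ag} {M' : ACMAS D sig' Ag'}
  {R : GState D n U → GState D n U' → Prop} {V : Set ℕ}

set_option linter.unusedSectionVars false

lemma master [Nonempty U] [Nonempty U']
    (hb : IsOBisim cst cst' M M' R)
    (huM : Uniform cst M) (huM' : Uniform cst' M')
    (hMs : M.Std) (hM's : M'.Std) (hVfin : V.Finite)
    (hbnd1 : ∀ s t : GState D n U, s ∈ M.S → (M.Tr s t ∨ M.EpiAny s t) →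
      Cardinal.mk ↥(adomF s ∪ adomF t ∪ Set.range cst) + Cardinal.mk ↥V ≤ Cardinal.mk U')
    (hbnd2 : ∀ s' t' : GState D n U', s' ∈ M'.S → (M'.Tr s' t' ∨ M'.EpiAny s' t') →
      Cardinal.mk ↥(adomF s' ∪ adomF t' ∪ Set.range cst') + Cardinal.mk ↥V ≤ Cardinal.mk U) :
    ∀ (ψ : FOCTLK D C n), ↑ψ.vars ⊆ V →
    ∀ (s : GState D n U) (s' : GState D n U') (σ : ℕ → U) (σ' : ℕ → U'),
    InvR cst cst' M M' R V s s' σ σ' →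
    (FOCTLK.sat cst M ψ s σ ↔ FOCTLK.sat cst' M' ψ s' σ') := by
  have hbf : IsOBisim cst' cst M' M (fun a b => R b a) := ⟨hb.2, hb.1⟩
  intro ψ
  induction ψ with
  | atom χ =>
    intro hv s s' σ σ' hinv
    obtain ⟨_, _, s₀, s₀', ν, ν', γ, _, _, _, hγ⟩ := hinv
    exact fo_transfer χ hγ hv
  | not χ ih =>
    intro hv s s' σ σ' hinv
    exact not_congr (ih hv s s' σ σ' hinv)
  | imp χ₁ χ₂ ih₁ ih₂ =>
    intro hv s s' σ σ' hinv
    rw [FOCTLK.vars, Finset.coe_union, Set.union_subset_iff] at hv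
    exact imp_congr (ih₁ hv.1 s s' σ σ' hinv) (ih₂ hv.2 s s' σ σ' hinv)
  | all x χ ih =>
    intro hv s s' σ σ' hinv
    rw [FOCTLK.vars, Finset.coe_insert, Set.insert_subset_iff] at hv
    obtain ⟨hsS, hs'S, s₀, s₀', ν, ν', γ, hR, hν, hν', hγ⟩ := hinv
    show (∀ u ∈ adomF s, _) ↔ (∀ u' ∈ adomF s', _)
    constructor
    · intro hl u' hu'
      have : u' ∈ γ '' adomF s := hγ.1.adom_image ▸ hu'
      obtain ⟨u, hu, rfl⟩ := this
      exact (ih hv.2 s s' _ _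
        ⟨hsS, hs'S, s₀, s₀', ν, ν', γ, hR, hν, hν', hγ.update hv.1 hu⟩).1 (hl u hu)
    · intro hr u hu
      have hgu : γ u ∈ adomF s' := hγ.1.adom_image ▸ ⟨u, hu, rfl⟩
      exact (ih hv.2 s s' _ _
        ⟨hsS, hs'S, s₀, s₀', ν, ν', γ, hR, hν, hν', hγ.update hv.1 hu⟩).2 (hr (γ u) hgu)
  | ax χ ih =>
    intro hv s s' σ σ' hinv
    constructor
    · intro hl r' hr' hr'0
      have hstep' : M'.Tr s' (r' 1) := by rw [← hr'0]; exact hr'.2 0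
      obtain ⟨t, htr, hinv2f⟩ :=
        step_fwd_trans hbf huM' huM hVfin hbnd2 (InvR_flip hinv) hstep'
      have hinv2 : InvR cst cst' M M' R V t (r' 1) σ σ' := InvR_flip hinv2f
      obtain ⟨r, hr, hr0, hr1⟩ := run_cons hMs hinv.1 htr
      have hsat := hl r hr hr0
      rw [hr1] at hsat
      exact (ih hv t (r' 1) σ σ' hinv2).1 hsat
    · intro hl r hr hr0
      have hstep : M.Tr s (r 1) := by rw [← hr0]; exact hr.2 0
      obtain ⟨t', htr', hinv2⟩ :=
        step_fwd_trans hb huM huM' hVfin hbnd1 hinv hstep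
      obtain ⟨r', hr', hr'0, hr'1⟩ := run_cons hM's hinv.2.1 htr'
      have hsat := hl r' hr' hr'0
      rw [hr'1] at hsat
      exact (ih hv (r 1) t' σ σ' hinv2).2 hsat
  | au χ₁ χ₂ ih₁ ih₂ =>
    intro hv s s' σ σ' hinv
    rw [FOCTLK.vars, Finset.coe_union, Set.union_subset_iff] at hv
    constructor
    · intro hl r' hr' hr'0
      obtain ⟨r, hr, hr0, hk⟩ :=
        match_run hbf huM' huM hVfin hbnd2 (InvR_flip hinv) hr' hr'0
      obtain ⟨k, hψ, hφ⟩ := hl r hr hr0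
      exact ⟨k, (ih₂ hv.2 _ _ _ _ (InvR_flip (hk k))).1 hψ,
        fun j hj => (ih₁ hv.1 _ _ _ _ (InvR_flip (hk j))).1 (hφ j hj)⟩
    · intro hl r hr hr0
      obtain ⟨r', hr', hr'0, hk⟩ :=
        match_run hb huM huM' hVfin hbnd1 hinv hr hr0
      obtain ⟨k, hψ, hφ⟩ := hl r' hr' hr'0
      exact ⟨k, (ih₂ hv.2 _ _ _ _ (hk k)).2 hψ,
        fun j hj => (ih₁ hv.1 _ _ _ _ (hk j)).2 (hφ j hj)⟩
  | eu χ₁ χ₂ ih₁ ih₂ =>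
    intro hv s s' σ σ' hinv
    rw [FOCTLK.vars, Finset.coe_union, Set.union_subset_iff] at hv
    constructor
    · intro hl
      obtain ⟨r, hr, hr0, k, hψ, hφ⟩ := hl
      obtain ⟨r', hr', hr'0, hk⟩ :=
        match_run hb huM huM' hVfin hbnd1 hinv hr hr0
      exact ⟨r', hr', hr'0, k, (ih₂ hv.2 _ _ _ _ (hk k)).1 hψ,
        fun j hj => (ih₁ hv.1 _ _ _ _ (hk j)).1 (hφ j hj)⟩
    · intro hl
      obtain ⟨r', hr', hr'0, k, hψ, hφ⟩ := hl
      obtain ⟨r, hr, hr0, hk⟩ :=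
        match_run hbf huM' huM hVfin hbnd2 (InvR_flip hinv) hr' hr'0
      exact ⟨r, hr, hr0, k, (ih₂ hv.2 _ _ _ _ (InvR_flip (hk k))).2 hψ,
        fun j hj => (ih₁ hv.1 _ _ _ _ (InvR_flip (hk j))).2 (hφ j hj)⟩
  | know i χ ih =>
    intro hv s s' σ σ' hinv
    constructor
    · intro hl t' hepi'
      obtain ⟨t, hepi, hinvf⟩ :=
        step_fwd_epi hbf huM' huM hVfin hbnd2 (InvR_flip hinv) hepi'
      exact (ih hv _ _ _ _ (InvR_flip hinvf)).1 (hl t hepi)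
    · intro hr t hepi
      obtain ⟨t', hepi', hinv2⟩ :=
        step_fwd_epi hb huM huM' hVfin hbnd1 hinv hepi
      exact (ih hv _ _ _ _ hinv2).2 (hr t' hepi')
  | ck χ ih =>
    intro hv s s' σ σ' hinv
    constructor
    · intro hl t' htg'
      obtain ⟨t, htg, hinvf⟩ :=
        match_tg hbf huM' huM hVfin hbnd2 (InvR_flip hinv) htg'
      exact (ih hv _ _ _ _ (InvR_flip hinvf)).1 (hl t htg)
    · intro hr t htg
      obtain ⟨t', htg', hinv2⟩ :=
        match_tg hb huM huM' hVfin hbnd1 hinv htg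
      exact (ih hv _ _ _ _ hinv2).2 (hr t' htg')

end Master

/-! ### STATEMENT 11 -/

theorem statement11
    {D : Schema} {C : Type} [Fintype C] {n : ℕ}
    {sig sig' : Fin (n+1) → AgentSig} {U U' : Type}
    (cst : C → U) (cst' : C → U')
    (hcst : Function.Injective cst) (hcst' : Function.Injective cst')
    {Ag : ∀ i, Agent D (sig i) U} {Ag' : ∀ i, Agent D (sig' i) U'}
    (M : ACMAS D sig Ag) (M' : ACMAS D sig' Ag')
    (hM : M.Std) (hM' : M'.Std)
    (hu : Uniform cst M) (hu' : Uniform cst' M')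
    (hsys : OBisimSys cst cst' M M')
    (φ : FOCTLK D C n)
    (h1 : ∀ r : ℕ → GState D n U, M.IsTERun r → r 0 = M.s0 → ∀ k : ℕ,
      Cardinal.mk ↥(adomF (r k) ∪ adomF (r (k+1)) ∪ Set.range cst) +
        (φ.vars.card : Cardinal) ≤ Cardinal.mk U')
    (h2 : ∀ r' : ℕ → GState D n U', M'.IsTERun r' → r' 0 = M'.s0 → ∀ k : ℕ,
      Cardinal.mk ↥(adomF (r' k) ∪ adomF (r' (k+1)) ∪ Set.range cst') +
        (φ.vars.card : Cardinal) ≤ Cardinal.mk U) :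
    FOCTLK.satM cst M φ ↔ FOCTLK.satM cst' M' φ := by
  obtain ⟨R, hbR, hRs0⟩ := hsys
  cases isEmpty_or_nonempty U with
  | inl hU =>
    cases isEmpty_or_nonempty U' with
    | inl hU' =>
      constructor
      · intro _ σ'; exact (hU'.false (σ' 0)).elim
      · intro _ σ; exact (hU.false (σ 0)).elim
    | inr hU' =>
      obtain ⟨ι, _⟩ := (hbR.2 M'.s0 M.s0 hRs0).2.2.1
      exact (hU.false (ι (Classical.arbitrary U'))).elim
  | inr hU =>
    cases isEmpty_or_nonempty U' with
    | inl hU' =>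
      obtain ⟨ι, _⟩ := (hbR.1 M.s0 M'.s0 hRs0).2.2.1
      exact (hU'.false (ι (Classical.arbitrary U))).elim
    | inr hU' =>
      set V : Set ℕ := ↑φ.vars with hV
      have hVfin : V.Finite := φ.vars.finite_toSet
      have hVcard : Cardinal.mk ↥V = (φ.vars.card : Cardinal) := Cardinal.mk_coe_finset
      have hbnd1 : ∀ s t : GState D n U, s ∈ M.S → (M.Tr s t ∨ M.EpiAny s t) →
          Cardinal.mk ↥(adomF s ∪ adomF t ∪ Set.range cst) + Cardinal.mk ↥V
            ≤ Cardinal.mk U' := by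
        intro s t hs he
        obtain ⟨r, k, hter, hr0, hrk, hrk1⟩ := exists_terun_through hM hs he
        have hh := h1 r hter hr0 k
        rw [hrk, hrk1] at hh
        rw [hVcard]
        exact hh
      have hbnd2 : ∀ s' t' : GState D n U', s' ∈ M'.S → (M'.Tr s' t' ∨ M'.EpiAny s' t') →
          Cardinal.mk ↥(adomF s' ∪ adomF t' ∪ Set.range cst') + Cardinal.mk ↥V
            ≤ Cardinal.mk U := by
        intro s' t' hs' he'
        obtain ⟨r', k, hter, hr0, hrk, hrk1⟩ := exists_terun_through hM' hs' he'
        have hh := h2 r' hter hr0 k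
        rw [hrk, hrk1] at hh
        rw [hVcard]
        exact hh
      constructor
      · intro hsat σ'
        obtain ⟨σ₀, hinvf⟩ := init_inv ⟨hbR.2, hbR.1⟩ hRs0 hM' hVfin hbnd2 σ'
        exact (master hbR hu hu' hM hM' hVfin hbnd1 hbnd2 φ subset_rfl
          _ _ _ _ (InvR_flip hinvf)).1 (hsat σ₀)
      · intro hsat' σ
        obtain ⟨σ', hinv⟩ := init_inv hbR hRs0 hM hVfin hbnd1 σ
        exact (master hbR hu hu' hM hM' hVfin hbnd1 hbnd2 φ subset_rfl
          _ _ _ _ hinv).2 (hsat' σ')
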